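/- arXiv:math/9903126 — 5 statements merged into one kernel-verified Lean document; each statement's English description precedes it below -/
import Mathlib

section
/- For the function f : ℝ² → ℝ defined by f(x,t) = ((1+t²)² + x²)^{-1/4}, both sides of the Grushin Sobolev inequality are finite and equality holds: (∫_{ℝ²} |f(x,t)|⁶ dx dt)^{1/3} = π^{-2/3} · ∫_{ℝ²} [ (∂f/∂t)(x,t)² + 4 t² (∂f/∂x)(x,t)² ] dx dt. -/
open MeasureTheory Real

open Filter Topology Set in
private lemma gr_tendsto_atBot_of_odd (g : ℝ → ℝ) (n : ℝ) (hodd : ∀ x, g (-x) = -g x)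
    (h : Tendsto g atTop (𝓝 n)) : Tendsto g atBot (𝓝 (-n)) := by
  have h2 : Tendsto (fun x => g (-x)) atBot (𝓝 n) := h.comp tendsto_neg_atBot_atTop
  refine h2.neg.congr fun x => ?_
  rw [hodd]; ring

open Filter Topology Set in
/-- FTC on the whole line for a nonnegative derivative: integrability is automatic. -/
private lemma gr_antideriv_full (g g' : ℝ → ℝ) (m n : ℝ)
    (hd : ∀ x, HasDerivAt g (g' x) x) (h0 : ∀ x, 0 ≤ g' x)
    (hbot : Tendsto g atBot (𝓝 m)) (htop : Tendsto g atTop (𝓝 n)) :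
    Integrable g' ∧ (∫ x, g' x) = n - m := by
  have hIoi : IntegrableOn g' (Ioi 0) :=
    integrableOn_Ioi_deriv_of_nonneg' (fun x _ => hd x) (fun x _ => h0 x) htop
  have hIio : IntegrableOn g' (Iio 0) := by
    have hd2 : ∀ x ∈ Ici (0:ℝ), HasDerivAt (fun y => -g (-y)) (g' (-x)) x := by
      intro x _
      have := ((hd (-x)).scomp x (hasDerivAt_neg x)).neg
      exact this.congr_deriv (by simp)
    have htop2 : Tendsto (fun y : ℝ => -g (-y)) atTop (𝓝 (-m)) :=
      (hbot.comp tendsto_neg_atTop_atBot).neg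
    have h2 : IntegrableOn (fun x => g' (-x)) (Ioi 0) :=
      integrableOn_Ioi_deriv_of_nonneg' hd2 (fun x _ => h0 _) htop2
    have hpre : (Neg.neg : ℝ → ℝ) ⁻¹' (Iio 0) = Ioi 0 := by
      ext y; simp
    have := (MeasurePreserving.integrableOn_comp_preimage
      (Measure.measurePreserving_neg (volume : Measure ℝ))
      (Homeomorph.neg ℝ).measurableEmbedding (f := g') (s := Iio 0)).1
    rw [hpre] at this
    exact this h2
  have hint : Integrable g' := by
    rw [← integrableOn_univ, ← Set.Iio_union_Ici (a := (0:ℝ))]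
    exact hIio.union ((integrableOn_Ici_iff_integrableOn_Ioi (f := g')).2 hIoi)
  exact ⟨hint, MeasureTheory.integral_of_hasDerivAt_of_tendsto hd hint hbot htop⟩

open Filter Topology Set in
/-- `∫ (b² + x²)^{-3/2} dx = 2/b²`. -/
private lemma gr_lemA {b : ℝ} (hb : 0 < b) :
    Integrable (fun x : ℝ => (b ^ 2 + x ^ 2) ^ (-(3:ℝ)/2)) ∧
    (∫ x : ℝ, (b ^ 2 + x ^ 2) ^ (-(3:ℝ)/2)) = 2 / b ^ 2 := by
  have hX : ∀ x : ℝ, (0:ℝ) < b ^ 2 + x ^ 2 := fun x => by positivity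
  set g : ℝ → ℝ := fun x => x / (b ^ 2 * Real.sqrt (b ^ 2 + x ^ 2)) with hgdef
  have hd : ∀ x, HasDerivAt g ((b ^ 2 + x ^ 2) ^ (-(3:ℝ)/2)) x := by
    intro x
    have hs0 : 0 < Real.sqrt (b ^ 2 + x ^ 2) := Real.sqrt_pos.2 (hX x)
    have h0 : HasDerivAt (fun x : ℝ => b ^ 2 + x ^ 2) (2 * x) x := by
      simpa using (hasDerivAt_pow 2 x).const_add (b ^ 2)
    have hs : HasDerivAt (fun x : ℝ => Real.sqrt (b ^ 2 + x ^ 2))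
        (2 * x / (2 * Real.sqrt (b ^ 2 + x ^ 2))) x := h0.sqrt (hX x).ne'
    have hden : HasDerivAt (fun x : ℝ => b ^ 2 * Real.sqrt (b ^ 2 + x ^ 2))
        (b ^ 2 * (2 * x / (2 * Real.sqrt (b ^ 2 + x ^ 2)))) x := hs.const_mul _
    have hq := (hasDerivAt_id x).div hden
      (by positivity : (0:ℝ) < b ^ 2 * Real.sqrt (b ^ 2 + x ^ 2)).ne'
    refine hq.congr_deriv (Eq.symm ?_)
    have hsq : Real.sqrt (b ^ 2 + x ^ 2) ^ 2 = b ^ 2 + x ^ 2 := Real.sq_sqrt (hX x).le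
    have hrw : (b ^ 2 + x ^ 2 : ℝ) ^ (-(3:ℝ)/2) = 1 / Real.sqrt (b ^ 2 + x ^ 2) ^ 3 := by
      have h1 : (b ^ 2 + x ^ 2 : ℝ) ^ ((3:ℝ)/2) = Real.sqrt (b ^ 2 + x ^ 2) ^ 3 := by
        rw [Real.sqrt_eq_rpow, ← Real.rpow_natCast ((b ^ 2 + x ^ 2 : ℝ) ^ ((1:ℝ)/2)) 3,
          ← Real.rpow_mul (hX x).le]
        norm_num
      rw [show (-(3:ℝ)/2) = -((3:ℝ)/2) by norm_num, Real.rpow_neg (hX x).le, h1, one_div]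
    rw [hrw]
    simp only [id]
    field_simp
    linear_combination (-1 : ℝ) * hsq
  have hnonneg : ∀ x, 0 ≤ (b ^ 2 + x ^ 2 : ℝ) ^ (-(3:ℝ)/2) :=
    fun x => Real.rpow_nonneg (hX x).le _
  have hodd : ∀ x, g (-x) = -g x := by
    intro x
    simp only [hgdef, neg_sq, neg_div]
  have htop : Tendsto g atTop (𝓝 (1 / b ^ 2)) := by
    have h2 : Tendsto (fun x : ℝ => b ^ 2 / x ^ 2) atTop (𝓝 0) :=
      tendsto_const_nhds.div_atTop (tendsto_pow_atTop two_ne_zero)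
    have h3 : Tendsto (fun x : ℝ => Real.sqrt (b ^ 2 / x ^ 2 + 1)) atTop (𝓝 1) := by
      have h4 : Tendsto (fun x : ℝ => b ^ 2 / x ^ 2 + 1) atTop (𝓝 (0 + 1)) :=
        h2.add tendsto_const_nhds
      have := (Real.continuous_sqrt.continuousAt (x := (0:ℝ) + 1)).tendsto.comp h4
      rw [zero_add, Real.sqrt_one] at this
      exact this
    have h5 : Tendsto (fun x : ℝ => b ^ 2 * Real.sqrt (b ^ 2 / x ^ 2 + 1)) atTop
        (𝓝 (b ^ 2 * 1)) := h3.const_mul _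
    have h6 := h5.inv₀ (by positivity)
    refine h6.congr' ?_ |>.mono_right (by rw [mul_one, one_div])
    filter_upwards [eventually_gt_atTop (0:ℝ)] with x hx
    have hx2 : Real.sqrt (b ^ 2 / x ^ 2 + 1) = Real.sqrt (b ^ 2 + x ^ 2) / x := by
      rw [show b ^ 2 / x ^ 2 + 1 = (b ^ 2 + x ^ 2) / x ^ 2 by field_simp,
        Real.sqrt_div (hX x).le, Real.sqrt_sq hx.le]
    rw [hx2, hgdef]
    have hs0 : 0 < Real.sqrt (b ^ 2 + x ^ 2) := Real.sqrt_pos.2 (hX x)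
    field_simp
  have hbot : Tendsto g atBot (𝓝 (-(1 / b ^ 2))) :=
    gr_tendsto_atBot_of_odd g _ hodd htop
  obtain ⟨hint, hval⟩ := gr_antideriv_full g _ _ _ hd hnonneg hbot htop
  refine ⟨hint, ?_⟩
  rw [hval]; ring

open Filter Topology Set in
private lemma gr_ratio_tendsto : Tendsto (fun t : ℝ => t / (1 + t ^ 2)) atTop (𝓝 0) := by
  have hnn : ∀ᶠ t : ℝ in atTop, 0 ≤ t⁻¹ := by
    filter_upwards [eventually_ge_atTop (0:ℝ)] with t ht
    exact inv_nonneg.2 ht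
  have h6 : Tendsto (fun t : ℝ => t⁻¹ + t) atTop atTop :=
    Filter.Tendsto.zero_eventuallyLE_add_atTop hnn tendsto_id
  have h7 := h6.inv_tendsto_atTop
  have heq : (fun t : ℝ => t⁻¹ + t)⁻¹ =ᶠ[atTop] fun t : ℝ => t / (1 + t ^ 2) := by
    filter_upwards [eventually_gt_atTop (0:ℝ)] with t ht
    show (t⁻¹ + t)⁻¹ = t / (1 + t ^ 2)
    rw [show t⁻¹ + t = (1 + t ^ 2) / t by field_simp, inv_div]
  exact Tendsto.congr' heq h7

open Filter Topology Set in
/-- `∫ 2/(1+t²)² dt = π`. -/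
private lemma gr_lemB :
    Integrable (fun t : ℝ => 2 / (1 + t ^ 2) ^ 2) ∧
    (∫ t : ℝ, 2 / (1 + t ^ 2) ^ 2) = π := by
  have hX : ∀ t : ℝ, (0:ℝ) < 1 + t ^ 2 := fun t => by positivity
  set g : ℝ → ℝ := fun t => Real.arctan t + t / (1 + t ^ 2) with hgdef
  have hd : ∀ t, HasDerivAt g (2 / (1 + t ^ 2) ^ 2) t := by
    intro t
    have h0 : HasDerivAt (fun t : ℝ => 1 + t ^ 2) (2 * t) t := by
      simpa using (hasDerivAt_pow 2 t).const_add 1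
    have h1 := (hasDerivAt_id t).div h0 (hX t).ne'
    have h2 := (Real.hasDerivAt_arctan t).add h1
    refine h2.congr_deriv (Eq.symm ?_)
    have := (hX t).ne'
    simp only [id]
    field_simp
    ring
  have hnonneg : ∀ t, 0 ≤ 2 / (1 + t ^ 2 : ℝ) ^ 2 := fun t => by positivity
  have hodd : ∀ t, g (-t) = -g t := by
    intro t
    simp only [hgdef, Real.arctan_neg, neg_sq, neg_div]
    ring
  have htop : Tendsto g atTop (𝓝 (π / 2 + 0)) :=
    (Real.tendsto_arctan_atTop.mono_right nhdsWithin_le_nhds).add gr_ratio_tendsto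
  have hbot : Tendsto g atBot (𝓝 (-(π / 2 + 0))) :=
    gr_tendsto_atBot_of_odd g _ hodd htop
  obtain ⟨hint, hval⟩ := gr_antideriv_full g _ _ _ hd hnonneg hbot htop
  refine ⟨hint, ?_⟩
  rw [hval]; ring

open Filter Topology Set in
/-- `∫ t² · 2/(1+t²)² dt = π`. -/
private lemma gr_lemC :
    Integrable (fun t : ℝ => t ^ 2 * (2 / (1 + t ^ 2) ^ 2)) ∧
    (∫ t : ℝ, t ^ 2 * (2 / (1 + t ^ 2) ^ 2)) = π := by
  have hX : ∀ t : ℝ, (0:ℝ) < 1 + t ^ 2 := fun t => by positivity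
  set g : ℝ → ℝ := fun t => Real.arctan t - t / (1 + t ^ 2) with hgdef
  have hd : ∀ t, HasDerivAt g (t ^ 2 * (2 / (1 + t ^ 2) ^ 2)) t := by
    intro t
    have h0 : HasDerivAt (fun t : ℝ => 1 + t ^ 2) (2 * t) t := by
      simpa using (hasDerivAt_pow 2 t).const_add 1
    have h1 := (hasDerivAt_id t).div h0 (hX t).ne'
    have h2 := (Real.hasDerivAt_arctan t).sub h1
    refine h2.congr_deriv (Eq.symm ?_)
    have := (hX t).ne'
    simp only [id]
    field_simp
    ring
  have hnonneg : ∀ t, 0 ≤ t ^ 2 * (2 / (1 + t ^ 2 : ℝ) ^ 2) := fun t => by positivity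
  have hodd : ∀ t, g (-t) = -g t := by
    intro t
    simp only [hgdef, Real.arctan_neg, neg_sq, neg_div]
    ring
  have htop : Tendsto g atTop (𝓝 (π / 2 - 0)) :=
    (Real.tendsto_arctan_atTop.mono_right nhdsWithin_le_nhds).sub gr_ratio_tendsto
  have hbot : Tendsto g atBot (𝓝 (-(π / 2 - 0))) :=
    gr_tendsto_atBot_of_odd g _ hodd htop
  obtain ⟨hint, hval⟩ := gr_antideriv_full g _ _ _ hd hnonneg hbot htop
  refine ⟨hint, ?_⟩
  rw [hval]; ring

open Filter Topology Set in
/-- Fubini assembly for integrands of the form `φ(t) · ((1+t²)² + x²)^{-3/2}`. -/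
private lemma gr_prodAux (φ : ℝ → ℝ) (hφc : Continuous φ) (hφ : ∀ t, 0 ≤ φ t)
    (hφi : Integrable (fun t => φ t * (2 / (1 + t ^ 2) ^ 2))) :
    Integrable (fun p : ℝ × ℝ => φ p.2 * ((1 + p.2 ^ 2) ^ 2 + p.1 ^ 2) ^ (-(3:ℝ)/2)) ∧
    (∫ p : ℝ × ℝ, φ p.2 * ((1 + p.2 ^ 2) ^ 2 + p.1 ^ 2) ^ (-(3:ℝ)/2)) =
      ∫ t : ℝ, φ t * (2 / (1 + t ^ 2) ^ 2) := by
  have hb : ∀ t : ℝ, (0:ℝ) < 1 + t ^ 2 := fun t => by positivity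
  have hcont : Continuous (fun p : ℝ × ℝ =>
      φ p.2 * ((1 + p.2 ^ 2) ^ 2 + p.1 ^ 2) ^ (-(3:ℝ)/2)) := by
    refine (hφc.comp continuous_snd).mul (Continuous.rpow_const ?_ fun p => Or.inl ?_)
    · fun_prop
    · positivity
  have hinner : ∀ t : ℝ, Integrable
      (fun x : ℝ => φ t * ((1 + t ^ 2) ^ 2 + x ^ 2) ^ (-(3:ℝ)/2)) :=
    fun t => ((gr_lemA (hb t)).1).const_mul (φ t)
  have hinnerval : ∀ t : ℝ,
      (∫ x : ℝ, φ t * ((1 + t ^ 2) ^ 2 + x ^ 2) ^ (-(3:ℝ)/2)) =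
        φ t * (2 / (1 + t ^ 2) ^ 2) := by
    intro t
    rw [integral_const_mul, (gr_lemA (hb t)).2]
  have hF : Integrable (fun p : ℝ × ℝ =>
      φ p.2 * ((1 + p.2 ^ 2) ^ 2 + p.1 ^ 2) ^ (-(3:ℝ)/2)) := by
    rw [show (volume : Measure (ℝ × ℝ)) = (volume : Measure ℝ).prod volume from
      Measure.volume_eq_prod ℝ ℝ]
    refine (integrable_prod_iff' ?_).2 ⟨Eventually.of_forall fun t => hinner t, ?_⟩
    · exact hcont.aestronglyMeasurable
    · have heq : (fun t : ℝ => ∫ x : ℝ,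
          ‖φ t * ((1 + t ^ 2) ^ 2 + x ^ 2) ^ (-(3:ℝ)/2)‖) =
          fun t => φ t * (2 / (1 + t ^ 2) ^ 2) := by
        funext t
        rw [← hinnerval t]
        refine integral_congr_ae (Eventually.of_forall fun x => ?_)
        show ‖φ t * ((1 + t ^ 2) ^ 2 + x ^ 2) ^ (-(3:ℝ)/2)‖ =
          φ t * ((1 + t ^ 2) ^ 2 + x ^ 2) ^ (-(3:ℝ)/2)
        rw [Real.norm_eq_abs, abs_of_nonneg]
        exact mul_nonneg (hφ t) (Real.rpow_nonneg (by positivity) _)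
      rw [heq]
      exact hφi
  refine ⟨hF, ?_⟩
  have hF' := hF
  rw [show (volume : Measure (ℝ × ℝ)) = (volume : Measure ℝ).prod volume from
    Measure.volume_eq_prod ℝ ℝ] at hF' ⊢
  rw [integral_prod_symm _ hF']
  exact integral_congr_ae (Eventually.of_forall fun t => hinnerval t)

/-- The function `f(x,t) = ((1+t²)² + x²)^(-1/4)` is an extremal for the sharp
Grushin Sobolev inequality on `ℝ²`: both sides are finite and equality holds. -/
theorem grushin_extremal_R2 (f : ℝ × ℝ → ℝ)
    (hf : ∀ x t : ℝ, f (x, t) = (((1 + t ^ 2) ^ 2 + x ^ 2) : ℝ) ^ (-(1 : ℝ) / 4)) :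
    Integrable (fun p : ℝ × ℝ => |f p| ^ 6) ∧
    Integrable (fun p : ℝ × ℝ =>
      (deriv (fun t : ℝ => f (p.1, t)) p.2) ^ 2
        + 4 * p.2 ^ 2 * (deriv (fun x : ℝ => f (x, p.2)) p.1) ^ 2) ∧
    (∫ p : ℝ × ℝ, |f p| ^ 6) ^ ((1 : ℝ) / 3) =
      Real.pi ^ (-(2 : ℝ) / 3) *
        ∫ p : ℝ × ℝ,
          ((deriv (fun t : ℝ => f (p.1, t)) p.2) ^ 2
            + 4 * p.2 ^ 2 * (deriv (fun x : ℝ => f (x, p.2)) p.1) ^ 2) := by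
  have hD : ∀ x t : ℝ, (0:ℝ) < (1 + t ^ 2) ^ 2 + x ^ 2 := fun x t => by positivity
  -- pointwise identity for |f|^6
  have h1 : (fun p : ℝ × ℝ => |f p| ^ 6) =
      fun p : ℝ × ℝ => (1:ℝ) * ((1 + p.2 ^ 2) ^ 2 + p.1 ^ 2) ^ (-(3:ℝ)/2) := by
    funext p
    obtain ⟨x, t⟩ := p
    rw [hf x t, one_mul]
    rw [abs_of_pos (Real.rpow_pos_of_pos (hD x t) _),
      ← Real.rpow_natCast ((((1 + t ^ 2) ^ 2 + x ^ 2) : ℝ) ^ (-(1:ℝ)/4)) 6,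
      ← Real.rpow_mul (hD x t).le]
    norm_num
  -- pointwise identity for the energy density
  have h2 : (fun p : ℝ × ℝ =>
      (deriv (fun t : ℝ => f (p.1, t)) p.2) ^ 2
        + 4 * p.2 ^ 2 * (deriv (fun x : ℝ => f (x, p.2)) p.1) ^ 2) =
      fun p : ℝ × ℝ => (fun s : ℝ => s ^ 2) p.2 *
        ((1 + p.2 ^ 2) ^ 2 + p.1 ^ 2) ^ (-(3:ℝ)/2) := by
    funext p
    obtain ⟨x, t⟩ := p
    simp only
    have hfun_t : (fun t' : ℝ => f (x, t')) =
        fun t' : ℝ => (((1 + t' ^ 2) ^ 2 + x ^ 2) : ℝ) ^ (-(1:ℝ)/4) :=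
      funext fun t' => hf x t'
    have hfun_x : (fun x' : ℝ => f (x', t)) =
        fun x' : ℝ => (((1 + t ^ 2) ^ 2 + x' ^ 2) : ℝ) ^ (-(1:ℝ)/4) :=
      funext fun x' => hf x' t
    have hbt : HasDerivAt (fun t' : ℝ => 1 + t' ^ 2) (2 * t) t := by
      simpa using (hasDerivAt_pow 2 t).const_add 1
    have hinnert : HasDerivAt (fun t' : ℝ => (1 + t' ^ 2) ^ 2 + x ^ 2)
        (2 * (1 + t ^ 2) * (2 * t)) t := by
      simpa using (hbt.pow 2).add_const (x ^ 2)
    have hinnerx : HasDerivAt (fun x' : ℝ => (1 + t ^ 2) ^ 2 + x' ^ 2) (2 * x) x := by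
      simpa using (hasDerivAt_pow 2 x).const_add ((1 + t ^ 2) ^ 2)
    have hdt := hinnert.rpow_const (p := -(1:ℝ)/4) (Or.inl (hD x t).ne')
    have hdx := hinnerx.rpow_const (p := -(1:ℝ)/4) (Or.inl (hD x t).ne')
    rw [hfun_t, hfun_x, hdt.deriv, hdx.deriv]
    have hA : ((((1 + t ^ 2) ^ 2 + x ^ 2) : ℝ) ^ ((-(1:ℝ)/4) - 1)) ^ 2 =
        (((1 + t ^ 2) ^ 2 + x ^ 2) : ℝ) ^ (-(5:ℝ)/2) := by
      rw [← Real.rpow_natCast ((((1 + t ^ 2) ^ 2 + x ^ 2) : ℝ) ^ ((-(1:ℝ)/4) - 1)) 2,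
        ← Real.rpow_mul (hD x t).le]
      norm_num
    have hB : (((1 + t ^ 2) ^ 2 + x ^ 2) : ℝ) ^ (-(3:ℝ)/2) =
        (((1 + t ^ 2) ^ 2 + x ^ 2) : ℝ) ^ (-(5:ℝ)/2) * ((1 + t ^ 2) ^ 2 + x ^ 2) := by
      have h := Real.rpow_add (hD x t) (-(5:ℝ)/2) 1
      rw [Real.rpow_one] at h
      rw [← h]
      norm_num
    rw [hB, ← hA]
    ring
  -- apply the Fubini lemma to the two sides
  have hP1 := gr_prodAux (fun _ => (1:ℝ)) continuous_const (fun _ => zero_le_one)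
    (by simpa only [one_mul] using gr_lemB.1)
  have hP2 := gr_prodAux (fun s => s ^ 2) (by fun_prop) (fun t => sq_nonneg t) gr_lemC.1
  have hval1 : (∫ p : ℝ × ℝ, |f p| ^ 6) = π := by
    rw [h1, hP1.2]
    simpa only [one_mul] using gr_lemB.2
  have hval2 : (∫ p : ℝ × ℝ,
      ((deriv (fun t : ℝ => f (p.1, t)) p.2) ^ 2
        + 4 * p.2 ^ 2 * (deriv (fun x : ℝ => f (x, p.2)) p.1) ^ 2)) = π := by
    rw [h2, hP2.2]
    exact gr_lemC.2
  refine ⟨by rw [h1]; exact hP1.1, by rw [h2]; exact hP2.1, ?_⟩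
  rw [hval1, hval2, show ((1:ℝ)/3) = -(2:ℝ)/3 + 1 by norm_num,
    Real.rpow_add Real.pi_pos, Real.rpow_one]
end

section
/- For every continuously differentiable compactly supported function F : M → ℝ on the upper half-plane M, (∫_M |F|⁶ dν)^{1/3} ≤ 4·π^{-2/3} · [ ∫_{y>0} |∇F(x,y)|² dx dy − (3/16) ∫_M |F|² dν ]. -/
open MeasureTheory Real


/-- Two-sided FTC bound: for C¹ compactly supported `g`, `g x ^ 2 ≤ ∫ |g| |g'|`. -/
lemma sq_le_integral_abs_mul (g : ℝ → ℝ) (hg : ContDiff ℝ 1 g) (hc : HasCompactSupport g)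
    (x : ℝ) : g x ^ 2 ≤ ∫ t, |g t| * |deriv g t| := by
  have hφ : ContDiff ℝ 1 (fun t => g t ^ 2) := hg.pow 2
  have hφc : HasCompactSupport (fun t => g t ^ 2) := by
    apply hc.mono'
    intro t ht
    have : g t ≠ 0 := by intro h0; simp [h0] at ht
    exact subset_tsupport _ this
  have h1 : ∫ t in Set.Iic x, deriv (fun t => g t ^ 2) t = g x ^ 2 :=
    hφc.integral_Iic_deriv_eq hφ x
  have h2 : ∫ t in Set.Ioi x, deriv (fun t => g t ^ 2) t = -(g x ^ 2) :=
    hφc.integral_Ioi_deriv_eq hφ x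
  have hderiv : ∀ t, deriv (fun t => g t ^ 2) t = 2 * g t * deriv g t := by
    intro t
    have : HasDerivAt (fun t => g t ^ 2) (2 * g t ^ 1 * deriv g t) t :=
      ((hg.differentiable one_ne_zero t).hasDerivAt).pow 2
    simpa using this.deriv
  have hint : Integrable (fun t => deriv (fun t => g t ^ 2) t) := by
    exact (hφ.continuous_deriv le_rfl).integrable_of_hasCompactSupport hφc.deriv
  have habs : Integrable (fun t => |g t| * |deriv g t|) := by
    have : Continuous fun t => |g t| * |deriv g t| :=
      (hg.continuous.abs).mul ((hg.continuous_deriv le_rfl).abs)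
    apply this.integrable_of_hasCompactSupport
    apply hc.mono'
    intro t ht
    have : g t ≠ 0 := by
      intro h0; simp [h0] at ht
    exact subset_tsupport _ this
  have hb1 : ∫ t in Set.Iic x, deriv (fun t => g t ^ 2) t ≤
      ∫ t in Set.Iic x, 2 * (|g t| * |deriv g t|) := by
    apply setIntegral_mono_on hint.integrableOn (habs.const_mul 2).integrableOn
      measurableSet_Iic
    intro t _
    rw [hderiv t]
    calc 2 * g t * deriv g t ≤ |2 * g t * deriv g t| := le_abs_self _
    _ = 2 * (|g t| * |deriv g t|) := by rw [abs_mul, abs_mul]; simp [abs_of_nonneg]; ring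
  have hb2 : -∫ t in Set.Ioi x, deriv (fun t => g t ^ 2) t ≤
      ∫ t in Set.Ioi x, 2 * (|g t| * |deriv g t|) := by
    rw [← integral_neg]
    apply setIntegral_mono_on hint.neg.integrableOn (habs.const_mul 2).integrableOn
      measurableSet_Ioi
    intro t _
    simp only [Pi.neg_apply]
    rw [hderiv t]
    calc -(2 * g t * deriv g t) ≤ |2 * g t * deriv g t| := neg_le_abs _
    _ = 2 * (|g t| * |deriv g t|) := by rw [abs_mul, abs_mul]; simp [abs_of_nonneg]; ring
  have hsplit : (∫ t in Set.Iic x, 2 * (|g t| * |deriv g t|)) +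
      (∫ t in Set.Ioi x, 2 * (|g t| * |deriv g t|)) = ∫ t, 2 * (|g t| * |deriv g t|) := by
    rw [← setIntegral_union (Set.Iic_disjoint_Ioi le_rfl) measurableSet_Ioi
      (habs.const_mul 2).integrableOn (habs.const_mul 2).integrableOn]
    rw [Set.Iic_union_Ioi]
    exact setIntegral_univ
  have : g x ^ 2 + g x ^ 2 ≤ ∫ t, 2 * (|g t| * |deriv g t|) := by
    rw [← hsplit]
    have := add_le_add hb1 hb2
    rw [h1, h2, neg_neg] at this
    exact this
  rw [integral_const_mul] at this
  linarith

/-- Cauchy–Schwarz, squared form. -/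
lemma sq_integral_mul_le {α : Type*} [MeasurableSpace α] {μ : Measure α} {f g : α → ℝ}
    (hf0 : ∀ x, 0 ≤ f x) (hg0 : ∀ x, 0 ≤ g x)
    (hfm : AEStronglyMeasurable f μ) (hgm : AEStronglyMeasurable g μ)
    (hf2 : Integrable (fun x => f x ^ 2) μ) (hg2 : Integrable (fun x => g x ^ 2) μ) :
    (∫ x, f x * g x ∂μ) ^ 2 ≤ (∫ x, f x ^ 2 ∂μ) * ∫ x, g x ^ 2 ∂μ := by
  have hpq : Real.HolderConjugate 2 2 := Real.HolderConjugate.two_two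
  have hfℒ : MemLp f (ENNReal.ofReal (2:ℝ)) μ := by
    rw [show ENNReal.ofReal (2:ℝ) = 2 by norm_num]
    exact (memLp_two_iff_integrable_sq hfm).2 hf2
  have hgℒ : MemLp g (ENNReal.ofReal (2:ℝ)) μ := by
    rw [show ENNReal.ofReal (2:ℝ) = 2 by norm_num]
    exact (memLp_two_iff_integrable_sq hgm).2 hg2
  have h := integral_mul_le_Lp_mul_Lq_of_nonneg hpq
    (Filter.Eventually.of_forall hf0) (Filter.Eventually.of_forall hg0) hfℒ hgℒ
  have hrw : ∀ h : α → ℝ, (∫ x, h x ^ (2:ℝ) ∂μ) = ∫ x, h x ^ (2:ℕ) ∂μ := by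
    intro h
    congr 1
    ext x
    rw [← Real.rpow_natCast (h x) 2]
    norm_num
  rw [hrw f, hrw g] at h
  have hF0 : 0 ≤ ∫ x, f x ^ 2 ∂μ := integral_nonneg fun x => sq_nonneg _
  have hG0 : 0 ≤ ∫ x, g x ^ 2 ∂μ := integral_nonneg fun x => sq_nonneg _
  have hfg0 : 0 ≤ ∫ x, f x * g x ∂μ := integral_nonneg fun x => mul_nonneg (hf0 x) (hg0 x)
  calc (∫ x, f x * g x ∂μ) ^ 2
      ≤ ((∫ x, f x ^ 2 ∂μ) ^ ((1:ℝ)/2) * (∫ x, g x ^ 2 ∂μ) ^ ((1:ℝ)/2)) ^ 2 := by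
        apply pow_le_pow_left₀ hfg0 h
    _ = (∫ x, f x ^ 2 ∂μ) * ∫ x, g x ^ 2 ∂μ := by
        rw [mul_pow, ← Real.rpow_natCast (_ ^ ((1:ℝ)/2)) 2, ← Real.rpow_natCast (_ ^ ((1:ℝ)/2)) 2,
          ← Real.rpow_mul hF0, ← Real.rpow_mul hG0]
        norm_num
  
/-- For a C¹ compactly supported function, `∫ g g' = 0`. -/
lemma integral_mul_deriv_eq_zero (g : ℝ → ℝ) (hg : ContDiff ℝ 1 g)
    (hc : HasCompactSupport g) : ∫ t, g t * deriv g t = 0 := by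
  have hφ : ContDiff ℝ 1 (fun t => g t ^ 2) := hg.pow 2
  have hφc : HasCompactSupport (fun t => g t ^ 2) := by
    apply hc.mono'
    intro t ht
    have : g t ≠ 0 := by intro h0; simp [h0] at ht
    exact subset_tsupport _ this
  have h1 : ∫ t in Set.Iic 0, deriv (fun t => g t ^ 2) t = g 0 ^ 2 :=
    hφc.integral_Iic_deriv_eq hφ 0
  have h2 : ∫ t in Set.Ioi 0, deriv (fun t => g t ^ 2) t = -(g 0 ^ 2) :=
    hφc.integral_Ioi_deriv_eq hφ 0
  have hint : Integrable (fun t => deriv (fun t => g t ^ 2) t) :=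
    (hφ.continuous_deriv le_rfl).integrable_of_hasCompactSupport hφc.deriv
  have hsplit : ∫ t, deriv (fun t => g t ^ 2) t = 0 := by
    rw [← setIntegral_univ, ← Set.Iic_union_Ioi (a := (0:ℝ)),
      setIntegral_union (Set.Iic_disjoint_Ioi le_rfl) measurableSet_Ioi
        hint.integrableOn hint.integrableOn, h1, h2]
    ring
  have hderiv : ∀ t, deriv (fun t => g t ^ 2) t = 2 * (g t * deriv g t) := by
    intro t
    have : HasDerivAt (fun t => g t ^ 2) (2 * g t ^ 1 * deriv g t) t :=
      ((hg.differentiable one_ne_zero t).hasDerivAt).pow 2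
    rw [this.deriv]; ring
  have : ∫ t, 2 * (g t * deriv g t) = 0 := by
    rw [← hsplit]; congr 1; ext t; rw [hderiv t]
  rw [integral_const_mul] at this
  linarith

lemma amgm3 {a b c : ℝ} (ha : 0 ≤ a) (hb : 0 ≤ b) (hc : 0 ≤ c) :
    a * b * c * 27 ≤ (a + b + c) ^ 3 := by
  nlinarith [sq_nonneg (a - b), sq_nonneg (b - c), sq_nonneg (a - c),
    mul_nonneg ha (sq_nonneg (b - c)), mul_nonneg hb (sq_nonneg (a - c)),
    mul_nonneg hc (sq_nonneg (a - b)),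
    mul_nonneg (add_nonneg (add_nonneg ha hb) hc) (sq_nonneg (a - b)),
    mul_nonneg (add_nonneg (add_nonneg ha hb) hc) (sq_nonneg (b - c)),
    mul_nonneg (add_nonneg (add_nonneg ha hb) hc) (sq_nonneg (a - c))]

lemma cube_chain {P Xv Yv Hv c : ℝ} (hP0 : 0 ≤ P) (hX0 : 0 ≤ Xv) (hY0 : 0 ≤ Yv) (hH0 : 0 ≤ Hv)
    (hPle : P ≤ Hv * Yv * Xv) (hc3 : 64 * (Real.pi ^ 2)⁻¹ ≤ c ^ 3) (hc0 : 0 ≤ c) :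
    P ≤ (c * (Xv + Yv + Hv / 16)) ^ 3 := by
  have hπ16 : Real.pi ^ 2 ≤ 16 := by nlinarith [Real.pi_le_four, Real.pi_pos]
  have hπpos : (0:ℝ) < Real.pi ^ 2 := by positivity
  have hinv : (16:ℝ)⁻¹ ≤ (Real.pi ^ 2)⁻¹ := by
    apply inv_anti₀ hπpos hπ16
  have hH160 : 0 ≤ Hv / 16 := by linarith
  have hE0 : 0 ≤ Xv + Yv + Hv / 16 := by linarith
  have hamgm := amgm3 hX0 hY0 hH160
  have hE3 : 0 ≤ (Xv + Yv + Hv / 16) ^ 3 := pow_nonneg hE0 3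
  have hcoef : (16:ℝ) / 27 ≤ 64 * (Real.pi ^ 2)⁻¹ := by nlinarith [hinv]
  calc P ≤ Hv * Yv * Xv := hPle
    _ = 16 / 27 * (Xv * Yv * (Hv / 16) * 27) := by ring
    _ ≤ 16 / 27 * (Xv + Yv + Hv / 16) ^ 3 := by
        apply mul_le_mul_of_nonneg_left hamgm (by norm_num)
    _ ≤ (64 * (Real.pi ^ 2)⁻¹) * (Xv + Yv + Hv / 16) ^ 3 :=
        mul_le_mul_of_nonneg_right hcoef hE3
    _ ≤ c ^ 3 * (Xv + Yv + Hv / 16) ^ 3 := mul_le_mul_of_nonneg_right hc3 hE3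
    _ = (c * (Xv + Yv + Hv / 16)) ^ 3 := by rw [mul_pow]

lemma hcs_of_zero {α : Type*} [TopologicalSpace α] {g : α → ℝ} (h : HasCompactSupport g)
    {f : α → ℝ} (hf : ∀ x, g x = 0 → f x = 0) : HasCompactSupport f :=
  h.mono' fun x hx => subset_tsupport _ (fun h0 => hx (hf x h0))

lemma slice_cs1 {f : ℝ × ℝ → ℝ} (h : HasCompactSupport f) (y : ℝ) :
    HasCompactSupport (fun x => f (x, y)) := by
  apply HasCompactSupport.intro (h.image continuous_fst)
  intro x hx
  by_contra h0
  exact hx ⟨(x, y), subset_tsupport _ h0, rfl⟩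

lemma slice_cs2 {f : ℝ × ℝ → ℝ} (h : HasCompactSupport f) (x : ℝ) :
    HasCompactSupport (fun t => f (x, t)) := by
  apply HasCompactSupport.intro (h.image continuous_snd)
  intro t ht
  by_contra h0
  exact ht ⟨(x, t), subset_tsupport _ h0, rfl⟩


/-- Sharp hyperbolic Sobolev inequality (form with spectral constant 3/16) on the
upper half-plane `M = {(x,y) : y > 0}` with invariant measure `dν = y⁻² dx dy`:
`(∫_M |F|⁶ dν)^{1/3} ≤ 4 π^{-2/3} [ ∫_M |DF|² dν − (3/16) ∫_M |F|² dν ]`,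
where `∫_M |DF|² dν = ∫_{y>0} |∇F|² dx dy`. -/
theorem hyperbolic_sobolev_six_a (F : ℝ × ℝ → ℝ)
    (hF : ContDiff ℝ 1 F) (hsupp : HasCompactSupport F)
    (hsub : tsupport F ⊆ {p : ℝ × ℝ | 0 < p.2}) :
    (∫ p in {p : ℝ × ℝ | 0 < p.2}, |F p| ^ 6 / p.2 ^ 2) ^ ((1 : ℝ) / 3) ≤
      4 * Real.pi ^ (-(2 : ℝ) / 3) *
        ((∫ p in {p : ℝ × ℝ | 0 < p.2},
            ((deriv (fun x : ℝ => F (x, p.2)) p.1) ^ 2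
              + (deriv (fun y : ℝ => F (p.1, y)) p.2) ^ 2))
          - (3 / 16) * ∫ p in {p : ℝ × ℝ | 0 < p.2}, F p ^ 2 / p.2 ^ 2) := by
  obtain ⟨ε, hε0, hεF⟩ : ∃ ε : ℝ, 0 < ε ∧ ∀ p ∈ tsupport F, ε ≤ p.2 := by
    rcases (tsupport F).eq_empty_or_nonempty with hK | hK
    · exact ⟨1, one_pos, fun p hp => by rw [hK] at hp; exact absurd hp (Set.notMem_empty p)⟩
    · obtain ⟨p₀, hp₀, hmin⟩ := hsupp.exists_isMinOn hK continuous_snd.continuousOn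
      exact ⟨p₀.2, hsub hp₀, fun p hp => isMinOn_iff.1 hmin p hp⟩
  have hF0 : ∀ p : ℝ × ℝ, p.2 < ε → F p = 0 := fun p hp =>
    image_eq_zero_of_notMem_tsupport (fun hmem => absurd (hεF p hmem) (not_le.2 hp))
  set u : ℝ × ℝ → ℝ := fun p => F p / Real.sqrt p.2 with hu_def
  have hu0 : ∀ p : ℝ × ℝ, p.2 < ε → u p = 0 := fun p hp => by
    simp [hu_def, hF0 p hp]
  have hu0' : ∀ p : ℝ × ℝ, ¬ 0 < p.2 → u p = 0 := fun p hp =>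
    hu0 p (lt_of_le_of_lt (not_lt.1 hp) hε0)
  have hopen : IsOpen {q : ℝ × ℝ | q.2 < ε} := isOpen_lt continuous_snd continuous_const
  have huev : ∀ p : ℝ × ℝ, p.2 < ε → u =ᶠ[nhds p] (fun _ => (0:ℝ)) := by
    intro p hp
    filter_upwards [hopen.mem_nhds hp] with q hq using hu0 q hq
  have hu : ContDiff ℝ 1 u := by
    rw [contDiff_iff_contDiffAt]
    intro p
    by_cases hp : p.2 < ε
    · exact (contDiffAt_const (c := (0:ℝ))).congr_of_eventuallyEq (huev p hp)
    · have hy : 0 < p.2 := lt_of_lt_of_le hε0 (not_lt.1 hp)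
      have hsq : ContDiffAt ℝ 1 (fun q : ℝ × ℝ => Real.sqrt q.2) p :=
        (Real.contDiffAt_sqrt hy.ne').comp p contDiff_snd.contDiffAt
      exact hF.contDiffAt.div hsq (Real.sqrt_ne_zero'.2 hy)
  have hcu : HasCompactSupport u := by
    apply hsupp.mono'
    intro p hp
    apply subset_tsupport
    intro hF0'
    exact hp (by simp [hu_def, hF0'])
  have hcontu : Continuous u := hu.continuous
  set u₁ : ℝ × ℝ → ℝ := fun p => fderiv ℝ u p (1, 0) with hu₁_def
  set u₂ : ℝ × ℝ → ℝ := fun p => fderiv ℝ u p (0, 1) with hu₂_def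
  have hdiffu : Differentiable ℝ u := hu.differentiable one_ne_zero
  have hd1 : ∀ p : ℝ × ℝ, HasDerivAt (fun x => u (x, p.2)) (u₁ p) p.1 := by
    intro p
    have h := (hdiffu p).hasFDerivAt
    have hline : HasDerivAt (fun x : ℝ => (x, p.2)) ((1:ℝ), (0:ℝ)) p.1 :=
      (hasDerivAt_id p.1).prodMk (hasDerivAt_const p.1 p.2)
    exact h.comp_hasDerivAt p.1 hline
  have hd2 : ∀ p : ℝ × ℝ, HasDerivAt (fun t => u (p.1, t)) (u₂ p) p.2 := by
    intro p
    have h := (hdiffu p).hasFDerivAt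
    have hline : HasDerivAt (fun t : ℝ => (p.1, t)) ((0:ℝ), (1:ℝ)) p.2 :=
      (hasDerivAt_const p.2 p.1).prodMk (hasDerivAt_id p.2)
    exact h.comp_hasDerivAt p.2 hline
  have hfder0 : ∀ p : ℝ × ℝ, (u =ᶠ[nhds p] fun _ => (0:ℝ)) → fderiv ℝ u p = 0 := by
    intro p hp
    rw [hp.fderiv_eq]
    exact fderiv_const_apply 0
  have hu₁0 : ∀ p : ℝ × ℝ, p.2 < ε → u₁ p = 0 := by
    intro p hp
    simp [hu₁_def, hfder0 p (huev p hp)]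
  have hu₂0 : ∀ p : ℝ × ℝ, p.2 < ε → u₂ p = 0 := by
    intro p hp
    simp [hu₂_def, hfder0 p (huev p hp)]
  have hu₁0' : ∀ p : ℝ × ℝ, ¬ 0 < p.2 → u₁ p = 0 := fun p hp =>
    hu₁0 p (lt_of_le_of_lt (not_lt.1 hp) hε0)
  have hu₂0' : ∀ p : ℝ × ℝ, ¬ 0 < p.2 → u₂ p = 0 := fun p hp =>
    hu₂0 p (lt_of_le_of_lt (not_lt.1 hp) hε0)
  have hcu₁ : HasCompactSupport u₁ := by
    apply hcu.mono'
    intro p hp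
    by_contra hns
    rw [notMem_tsupport_iff_eventuallyEq] at hns
    exact hp (by simp [hu₁_def, hfder0 p hns])
  have hcu₂ : HasCompactSupport u₂ := by
    apply hcu.mono'
    intro p hp
    by_contra hns
    rw [notMem_tsupport_iff_eventuallyEq] at hns
    exact hp (by simp [hu₂_def, hfder0 p hns])
  have hcontu₁ : Continuous u₁ := (hu.continuous_fderiv one_ne_zero).clm_apply continuous_const
  have hcontu₂ : Continuous u₂ := (hu.continuous_fderiv one_ne_zero).clm_apply continuous_const
  have hslice1 : ∀ y : ℝ, ContDiff ℝ 1 (fun x => u (x, y)) := fun y =>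
    hu.comp (contDiff_id.prodMk contDiff_const)
  have hslice2 : ∀ x : ℝ, ContDiff ℝ 1 (fun t => u (x, t)) := fun x =>
    hu.comp (contDiff_const.prodMk contDiff_id)
  have hds1 : ∀ p : ℝ × ℝ, deriv (fun x => u (x, p.2)) p.1 = u₁ p := fun p => (hd1 p).deriv
  have hds2 : ∀ p : ℝ × ℝ, deriv (fun t => u (p.1, t)) p.2 = u₂ p := fun p => (hd2 p).deriv
  -- global integrands
  set q1 : ℝ × ℝ → ℝ := fun p => u p ^ 2 / p.2 with hq1_def
  set q2 : ℝ × ℝ → ℝ := fun p => p.2 * u₁ p ^ 2 with hq2_def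
  set q3 : ℝ × ℝ → ℝ := fun p => p.2 * u₂ p ^ 2 with hq3_def
  set q4 : ℝ × ℝ → ℝ := fun p => u p * u₂ p with hq4_def
  set q5 : ℝ × ℝ → ℝ := fun p => p.2 * u p ^ 6 with hq5_def
  set q6 : ℝ × ℝ → ℝ := fun p => |u p| / Real.sqrt p.2 with hq6_def
  set q7 : ℝ × ℝ → ℝ := fun p => Real.sqrt p.2 * |u₂ p| with hq7_def
  have hcover : ∀ f : ℝ × ℝ → ℝ, (∀ p : ℝ × ℝ, p.2 < ε → f p = 0) →
      ContinuousOn f {p : ℝ × ℝ | 0 < p.2} → Continuous f := by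
    intro f h0 hcont
    rw [continuous_iff_continuousAt]
    intro p
    by_cases hp : p.2 < ε
    · have hev : f =ᶠ[nhds p] (fun _ => (0:ℝ)) := by
        filter_upwards [hopen.mem_nhds hp] with q hq using h0 q hq
      exact ContinuousAt.congr continuousAt_const hev.symm
    · have hy : 0 < p.2 := lt_of_lt_of_le hε0 (not_lt.1 hp)
      exact hcont.continuousAt ((isOpen_lt continuous_const continuous_snd).mem_nhds hy)
  have hq1c : Continuous q1 := by
    apply hcover _ (fun p hp => by simp [hq1_def, hu0 p hp])
    exact ((hcontu.pow 2).continuousOn).div continuous_snd.continuousOn (fun p hp => ne_of_gt hp)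
  have hq2c : Continuous q2 := continuous_snd.mul (hcontu₁.pow 2)
  have hq3c : Continuous q3 := continuous_snd.mul (hcontu₂.pow 2)
  have hq4c : Continuous q4 := hcontu.mul hcontu₂
  have hq5c : Continuous q5 := continuous_snd.mul (hcontu.pow 6)
  have hq6c : Continuous q6 := by
    apply hcover _ (fun p hp => by simp [hq6_def, hu0 p hp])
    exact (hcontu.abs.continuousOn).div
      (Real.continuous_sqrt.comp continuous_snd).continuousOn
      (fun p hp => Real.sqrt_ne_zero'.2 hp)
  have hq7c : Continuous q7 := (Real.continuous_sqrt.comp continuous_snd).mul hcontu₂.abs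
  have hq1int : Integrable q1 := hq1c.integrable_of_hasCompactSupport
    (hcs_of_zero hcu (fun p h0 => by simp [hq1_def, h0]))
  have hq2int : Integrable q2 := hq2c.integrable_of_hasCompactSupport
    (hcs_of_zero hcu₁ (fun p h0 => by simp [hq2_def, h0]))
  have hq3int : Integrable q3 := hq3c.integrable_of_hasCompactSupport
    (hcs_of_zero hcu₂ (fun p h0 => by simp [hq3_def, h0]))
  have hq4int : Integrable q4 := hq4c.integrable_of_hasCompactSupport
    (hcs_of_zero hcu (fun p h0 => by simp [hq4_def, h0]))
  have hq5int : Integrable q5 := hq5c.integrable_of_hasCompactSupport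
    (hcs_of_zero hcu (fun p h0 => by simp [hq5_def, h0]))
  set X : ℝ := ∫ p : ℝ × ℝ, q2 p with hX_def
  set Y : ℝ := ∫ p : ℝ × ℝ, q3 p with hY_def
  set H : ℝ := ∫ p : ℝ × ℝ, q1 p with hH_def
  set P : ℝ := ∫ p : ℝ × ℝ, q5 p with hP_def
  have hq1nn : ∀ p : ℝ × ℝ, 0 ≤ q1 p := by
    intro p
    by_cases hp : 0 < p.2
    · exact div_nonneg (sq_nonneg _) hp.le
    · simp [hq1_def, hu0' p hp]
  have hq2nn : ∀ p : ℝ × ℝ, 0 ≤ q2 p := by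
    intro p
    by_cases hp : 0 < p.2
    · exact mul_nonneg hp.le (sq_nonneg _)
    · simp [hq2_def, hu₁0' p hp]
  have hq3nn : ∀ p : ℝ × ℝ, 0 ≤ q3 p := by
    intro p
    by_cases hp : 0 < p.2
    · exact mul_nonneg hp.le (sq_nonneg _)
    · simp [hq3_def, hu₂0' p hp]
  have hq5nn : ∀ p : ℝ × ℝ, 0 ≤ q5 p := by
    intro p
    by_cases hp : 0 < p.2
    · exact mul_nonneg hp.le (by positivity)
    · simp [hq5_def, hu0' p hp]
  have hX0 : 0 ≤ X := integral_nonneg hq2nn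
  have hY0 : 0 ≤ Y := integral_nonneg hq3nn
  have hH0 : 0 ≤ H := integral_nonneg hq1nn
  have hP0 : 0 ≤ P := integral_nonneg hq5nn
  have hvol : (volume : Measure (ℝ × ℝ)) = (volume : Measure ℝ).prod volume :=
    MeasureTheory.Measure.volume_eq_prod ℝ ℝ
  -- Cauchy-Schwarz for the mixed term
  have habs_eq : ∀ p : ℝ × ℝ, |u p| * |u₂ p| = q6 p * q7 p := by
    intro p
    by_cases hp : 0 < p.2
    · have hs0 : Real.sqrt p.2 ≠ 0 := Real.sqrt_ne_zero'.2 hp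
      simp only [hq6_def, hq7_def]
      field_simp
    · simp [hq6_def, hq7_def, hu0' p hp]
  have hq6sq : ∀ p : ℝ × ℝ, q6 p ^ 2 = q1 p := by
    intro p
    by_cases hp : 0 < p.2
    · simp [hq6_def, hq1_def, div_pow, sq_abs, Real.sq_sqrt hp.le]
    · simp [hq6_def, hq1_def, hu0' p hp]
  have hq7sq : ∀ p : ℝ × ℝ, q7 p ^ 2 = q3 p := by
    intro p
    by_cases hp : 0 ≤ p.2
    · simp [hq7_def, hq3_def, mul_pow, sq_abs, Real.sq_sqrt hp]
    · have h2 : u₂ p = 0 := hu₂0' p (fun h => hp h.le)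
      simp [hq7_def, hq3_def, h2]
  have hCS2 : (∫ p : ℝ × ℝ, |u p| * |u₂ p|) ^ 2 ≤ H * Y := by
    have heq : ∫ p : ℝ × ℝ, |u p| * |u₂ p| = ∫ p : ℝ × ℝ, q6 p * q7 p :=
      integral_congr_ae (Filter.Eventually.of_forall habs_eq)
    rw [heq]
    have h6int : Integrable (fun p : ℝ × ℝ => q6 p ^ 2) := by
      have : (fun p : ℝ × ℝ => q6 p ^ 2) = q1 := funext hq6sq
      rw [this]; exact hq1int
    have h7int : Integrable (fun p : ℝ × ℝ => q7 p ^ 2) := by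
      have : (fun p : ℝ × ℝ => q7 p ^ 2) = q3 := funext hq7sq
      rw [this]; exact hq3int
    have h := sq_integral_mul_le
      (f := q6) (g := q7)
      (fun p => div_nonneg (abs_nonneg _) (Real.sqrt_nonneg _))
      (fun p => mul_nonneg (Real.sqrt_nonneg _) (abs_nonneg _))
      hq6c.aestronglyMeasurable hq7c.aestronglyMeasurable h6int h7int
    calc (∫ p : ℝ × ℝ, q6 p * q7 p) ^ 2
        ≤ (∫ p : ℝ × ℝ, q6 p ^ 2) * ∫ p : ℝ × ℝ, q7 p ^ 2 := h
      _ = H * Y := by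
          rw [show (fun p : ℝ × ℝ => q6 p ^ 2) = q1 from funext hq6sq,
            show (fun p : ℝ × ℝ => q7 p ^ 2) = q3 from funext hq7sq]
  -- bound on G(y) = ∫ u(x,y)^2 dx
  set Φ : ℝ × ℝ → ℝ := fun p => |u p| * |u₂ p| with hΦ_def
  have hΦc : Continuous Φ := hcontu.abs.mul hcontu₂.abs
  have hΦint : Integrable Φ := hΦc.integrable_of_hasCompactSupport
    (hcs_of_zero hcu (fun p h0 => by simp [hΦ_def, h0]))
  have hΦprod : Integrable Φ ((volume : Measure ℝ).prod volume) := by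
    rw [← hvol]; exact hΦint
  have hG2 : ∀ y : ℝ, (∫ x : ℝ, u (x, y) ^ 2) ^ 2 ≤ H * Y := by
    intro y
    have hpt : ∀ x : ℝ, u (x, y) ^ 2 ≤ ∫ t, Φ (x, t) := by
      intro x
      have h := sq_le_integral_abs_mul (fun t => u (x, t)) (hslice2 x) (slice_cs2 hcu x) y
      calc u (x, y) ^ 2 ≤ ∫ t, |u (x, t)| * |deriv (fun t' => u (x, t')) t| := h
        _ = ∫ t, Φ (x, t) := by
            apply integral_congr_ae
            apply Filter.Eventually.of_forall
            intro t
            show |u (x, t)| * |deriv (fun t' => u (x, t')) t| = Φ (x, t)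
            have hh : deriv (fun t' => u (x, t')) t = u₂ (x, t) := (hd2 (x, t)).deriv
            rw [hh]
    have hint_out : Integrable (fun x : ℝ => ∫ t, Φ (x, t)) := hΦprod.integral_prod_left
    have hsliceint : Integrable (fun x : ℝ => u (x, y) ^ 2) := by
      apply ((hslice1 y).continuous.pow 2).integrable_of_hasCompactSupport
      exact hcs_of_zero (slice_cs1 hcu y) (fun x h0 => by simp [h0])
    have hGle : (∫ x : ℝ, u (x, y) ^ 2) ≤ ∫ x : ℝ, ∫ t, Φ (x, t) :=
      integral_mono hsliceint hint_out hpt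
    have hswap : (∫ x : ℝ, ∫ t, Φ (x, t)) = ∫ p : ℝ × ℝ, Φ p := by
      have h := integral_prod Φ hΦprod
      rw [← hvol] at h
      exact h.symm
    have h0G : 0 ≤ ∫ x : ℝ, u (x, y) ^ 2 := integral_nonneg fun x => sq_nonneg _
    calc (∫ x : ℝ, u (x, y) ^ 2) ^ 2
        ≤ (∫ p : ℝ × ℝ, Φ p) ^ 2 := by
          apply pow_le_pow_left₀ h0G (hswap ▸ hGle)
      _ ≤ H * Y := hCS2
  -- per-line L⁶ bound
  have hline6 : ∀ y : ℝ, (∫ x : ℝ, u (x, y) ^ 6) ≤ (H * Y) * ∫ x : ℝ, u₁ (x, y) ^ 2 := by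
    intro y
    have hgc : ContDiff ℝ 1 (fun x => u (x, y)) := hslice1 y
    have hgcs : HasCompactSupport (fun x => u (x, y)) := slice_cs1 hcu y
    have hgcont : Continuous (fun x => u (x, y)) := hgc.continuous
    have hderiv_eq : ∀ x : ℝ, deriv (fun x' => u (x', y)) x = u₁ (x, y) := fun x =>
      (hd1 (x, y)).deriv
    set A : ℝ := ∫ x, |u (x, y)| * |deriv (fun x' => u (x', y)) x| with hA_def
    have hsup : ∀ x : ℝ, u (x, y) ^ 2 ≤ A := sq_le_integral_abs_mul _ hgc hgcs
    have hA0 : 0 ≤ A := integral_nonneg fun x => mul_nonneg (abs_nonneg _) (abs_nonneg _)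
    have hG0 : 0 ≤ ∫ x : ℝ, u (x, y) ^ 2 := integral_nonneg fun x => sq_nonneg _
    have hXl0 : 0 ≤ ∫ x : ℝ, u₁ (x, y) ^ 2 := integral_nonneg fun x => sq_nonneg _
    have hgint2 : Integrable (fun x : ℝ => u (x, y) ^ 2) := by
      apply (hgcont.pow 2).integrable_of_hasCompactSupport
      exact hcs_of_zero hgcs (fun x h0 => by simp [h0])
    have hderc : Continuous (fun x : ℝ => u₁ (x, y)) :=
      hcontu₁.comp (continuous_id.prodMk continuous_const)
    have hdercs : HasCompactSupport (fun x : ℝ => u₁ (x, y)) := slice_cs1 hcu₁ y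
    have hderint2 : Integrable (fun x : ℝ => u₁ (x, y) ^ 2) := by
      apply (hderc.pow 2).integrable_of_hasCompactSupport
      exact hcs_of_zero hdercs (fun x h0 => by simp [h0])
    have hCSline : A ^ 2 ≤ (∫ x : ℝ, u (x, y) ^ 2) * ∫ x : ℝ, u₁ (x, y) ^ 2 := by
      have h := sq_integral_mul_le
        (f := fun x : ℝ => |u (x, y)|) (g := fun x : ℝ => |deriv (fun x' => u (x', y)) x|)
        (fun x => abs_nonneg _) (fun x => abs_nonneg _)
        (hgcont.abs.aestronglyMeasurable)
        (((hgc.continuous_deriv le_rfl).abs).aestronglyMeasurable)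
        (by
          apply hgint2.congr
          apply Filter.Eventually.of_forall
          intro x
          simp only [sq_abs])
        (by
          apply hderint2.congr
          apply Filter.Eventually.of_forall
          intro x
          simp only [sq_abs]
          rw [hderiv_eq x])
      calc A ^ 2 ≤ (∫ x : ℝ, |u (x, y)| ^ 2) * ∫ x : ℝ, |deriv (fun x' => u (x', y)) x| ^ 2 := h
        _ = (∫ x : ℝ, u (x, y) ^ 2) * ∫ x : ℝ, u₁ (x, y) ^ 2 := by
            congr 1
            · apply integral_congr_ae
              apply Filter.Eventually.of_forall
              intro x
              simp [sq_abs]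
            · apply integral_congr_ae
              apply Filter.Eventually.of_forall
              intro x
              simp only [sq_abs]
              rw [hderiv_eq x]
    have hpt6 : ∀ x : ℝ, u (x, y) ^ 6 ≤ A ^ 2 * u (x, y) ^ 2 := by
      intro x
      have h1 : (u (x, y) ^ 2) ^ 2 ≤ A ^ 2 := pow_le_pow_left₀ (sq_nonneg _) (hsup x) 2
      calc u (x, y) ^ 6 = (u (x, y) ^ 2) ^ 2 * u (x, y) ^ 2 := by ring
        _ ≤ A ^ 2 * u (x, y) ^ 2 := mul_le_mul_of_nonneg_right h1 (sq_nonneg _)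
    have hint6 : Integrable (fun x : ℝ => u (x, y) ^ 6) := by
      apply (hgcont.pow 6).integrable_of_hasCompactSupport
      exact hcs_of_zero hgcs (fun x h0 => by simp [h0])
    have hmono : (∫ x : ℝ, u (x, y) ^ 6) ≤ ∫ x : ℝ, A ^ 2 * u (x, y) ^ 2 :=
      integral_mono hint6 (hgint2.const_mul _) hpt6
    rw [integral_const_mul] at hmono
    calc (∫ x : ℝ, u (x, y) ^ 6) ≤ A ^ 2 * ∫ x : ℝ, u (x, y) ^ 2 := hmono
      _ ≤ ((∫ x : ℝ, u (x, y) ^ 2) * ∫ x : ℝ, u₁ (x, y) ^ 2) * ∫ x : ℝ, u (x, y) ^ 2 :=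
          mul_le_mul_of_nonneg_right hCSline hG0
      _ = (∫ x : ℝ, u (x, y) ^ 2) ^ 2 * ∫ x : ℝ, u₁ (x, y) ^ 2 := by ring
      _ ≤ (H * Y) * ∫ x : ℝ, u₁ (x, y) ^ 2 :=
          mul_le_mul_of_nonneg_right (hG2 y) hXl0
  -- Fubini: assemble P ≤ H * Y * X
  have hq5prod : Integrable q5 ((volume : Measure ℝ).prod volume) := by
    rw [← hvol]; exact hq5int
  have hq2prod : Integrable q2 ((volume : Measure ℝ).prod volume) := by
    rw [← hvol]; exact hq2int
  have hPle : P ≤ H * Y * X := by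
    have hP_eq : P = ∫ y : ℝ, ∫ x : ℝ, q5 (x, y) := by
      rw [hP_def, hvol, integral_prod _ hq5prod]
      exact integral_integral_swap hq5prod
    have hX_eq : X = ∫ y : ℝ, ∫ x : ℝ, q2 (x, y) := by
      rw [hX_def, hvol, integral_prod _ hq2prod]
      exact integral_integral_swap hq2prod
    have hinner5 : ∀ y : ℝ, (∫ x : ℝ, q5 (x, y)) = y * ∫ x : ℝ, u (x, y) ^ 6 := by
      intro y
      simp only [hq5_def]
      exact integral_const_mul y _
    have hinner2 : ∀ y : ℝ, (∫ x : ℝ, q2 (x, y)) = y * ∫ x : ℝ, u₁ (x, y) ^ 2 := by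
      intro y
      simp only [hq2_def]
      exact integral_const_mul y _
    have hpw : ∀ y : ℝ, (∫ x : ℝ, q5 (x, y)) ≤ (H * Y) * ∫ x : ℝ, q2 (x, y) := by
      intro y
      rw [hinner5 y, hinner2 y]
      by_cases hy : 0 ≤ y
      · calc y * ∫ x : ℝ, u (x, y) ^ 6
            ≤ y * ((H * Y) * ∫ x : ℝ, u₁ (x, y) ^ 2) :=
              mul_le_mul_of_nonneg_left (hline6 y) hy
          _ = (H * Y) * (y * ∫ x : ℝ, u₁ (x, y) ^ 2) := by ring
      · have hy' : y < ε := lt_of_lt_of_le (not_le.1 hy) hε0.le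
        have h60 : ∀ x : ℝ, u (x, y) ^ 6 = 0 := fun x => by
          rw [hu0 (x, y) hy']; norm_num
        have h20 : ∀ x : ℝ, u₁ (x, y) ^ 2 = 0 := fun x => by
          rw [hu₁0 (x, y) hy']; norm_num
        simp [h60, h20]
    have hint5out : Integrable (fun y : ℝ => ∫ x : ℝ, q5 (x, y)) := hq5prod.integral_prod_right
    have hint2out : Integrable (fun y : ℝ => ∫ x : ℝ, q2 (x, y)) := hq2prod.integral_prod_right
    calc P = ∫ y : ℝ, ∫ x : ℝ, q5 (x, y) := hP_eq
      _ ≤ ∫ y : ℝ, (H * Y) * ∫ x : ℝ, q2 (x, y) :=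
          integral_mono hint5out (hint2out.const_mul _) hpw
      _ = (H * Y) * ∫ y : ℝ, ∫ x : ℝ, q2 (x, y) := integral_const_mul _ _
      _ = H * Y * X := by rw [← hX_eq]
  -- relation between F-quantities and u-quantities
  set F₁ : ℝ × ℝ → ℝ := fun p => fderiv ℝ F p (1, 0) with hF₁_def
  set F₂ : ℝ × ℝ → ℝ := fun p => fderiv ℝ F p (0, 1) with hF₂_def
  have hdiffF : Differentiable ℝ F := hF.differentiable one_ne_zero
  have hFd1 : ∀ p : ℝ × ℝ, HasDerivAt (fun x => F (x, p.2)) (F₁ p) p.1 := by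
    intro p
    have h := (hdiffF p).hasFDerivAt
    have hline : HasDerivAt (fun x : ℝ => (x, p.2)) ((1:ℝ), (0:ℝ)) p.1 :=
      (hasDerivAt_id p.1).prodMk (hasDerivAt_const p.1 p.2)
    exact h.comp_hasDerivAt p.1 hline
  have hFd2 : ∀ p : ℝ × ℝ, HasDerivAt (fun t => F (p.1, t)) (F₂ p) p.2 := by
    intro p
    have h := (hdiffF p).hasFDerivAt
    have hline : HasDerivAt (fun t : ℝ => (p.1, t)) ((0:ℝ), (1:ℝ)) p.2 :=
      (hasDerivAt_const p.2 p.1).prodMk (hasDerivAt_id p.2)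
    exact h.comp_hasDerivAt p.2 hline
  have hFder1 : ∀ p : ℝ × ℝ, deriv (fun x => F (x, p.2)) p.1 = F₁ p := fun p => (hFd1 p).deriv
  have hFder2 : ∀ p : ℝ × ℝ, deriv (fun t => F (p.1, t)) p.2 = F₂ p := fun p => (hFd2 p).deriv
  have hFu : ∀ q : ℝ × ℝ, F q = u q * Real.sqrt q.2 := by
    intro q
    by_cases hq : 0 < q.2
    · have hs0 : Real.sqrt q.2 ≠ 0 := Real.sqrt_ne_zero'.2 hq
      simp only [hu_def]
      rw [div_mul_cancel₀ _ hs0]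
    · have h1 : F q = 0 := hF0 q (lt_of_le_of_lt (not_lt.1 hq) hε0)
      have h2 : Real.sqrt q.2 = 0 := Real.sqrt_eq_zero'.2 (not_lt.1 hq)
      rw [h1, h2, mul_zero]
  have hkey : ∀ p : ℝ × ℝ, 0 < p.2 →
      F₁ p ^ 2 + F₂ p ^ 2 = q2 p + q3 p + q4 p + q1 p / 4 := by
    intro p hp
    have hsne : Real.sqrt p.2 ≠ 0 := Real.sqrt_ne_zero'.2 hp
    have hF1val : F₁ p = u₁ p * Real.sqrt p.2 := by
      have hfun : (fun x => F (x, p.2)) = fun x => u (x, p.2) * Real.sqrt p.2 :=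
        funext fun x => hFu (x, p.2)
      rw [← hFder1 p, hfun]
      exact ((hd1 p).mul_const _).deriv
    have hF2val : F₂ p = u₂ p * Real.sqrt p.2 + u p * (1 / (2 * Real.sqrt p.2)) := by
      have hfun : (fun t => F (p.1, t)) = fun t => u (p.1, t) * Real.sqrt t :=
        funext fun t => hFu (p.1, t)
      rw [← hFder2 p, hfun]
      have hs : HasDerivAt Real.sqrt (1 / (2 * Real.sqrt p.2)) p.2 :=
        Real.hasDerivAt_sqrt hp.ne'
      exact ((hd2 p).mul hs).deriv
    have halg : ∀ a Yv U U1 U2 : ℝ, a ≠ 0 → a * a = Yv →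
        (U1 * a) ^ 2 + (U2 * a + U * (1 / (2 * a))) ^ 2
          = Yv * U1 ^ 2 + Yv * U2 ^ 2 + U * U2 + U ^ 2 / Yv / 4 := by
      intro a Yv U U1 U2 ha hY
      subst hY
      field_simp
      ring
    have hay : Real.sqrt p.2 * Real.sqrt p.2 = p.2 := Real.mul_self_sqrt hp.le
    show F₁ p ^ 2 + F₂ p ^ 2 = p.2 * u₁ p ^ 2 + p.2 * u₂ p ^ 2 + u p * u₂ p + u p ^ 2 / p.2 / 4
    rw [hF1val, hF2val]
    exact halg _ _ _ _ _ hsne hay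
  have hsmeas : MeasurableSet {p : ℝ × ℝ | 0 < p.2} :=
    measurableSet_lt measurable_const measurable_snd
  -- LHS conversion
  have hLHS : (∫ p in {p : ℝ × ℝ | 0 < p.2}, |F p| ^ 6 / p.2 ^ 2) = P := by
    have h1 : Set.EqOn (fun p : ℝ × ℝ => |F p| ^ 6 / p.2 ^ 2) q5 {p : ℝ × ℝ | 0 < p.2} := by
      intro p hp
      have hp' : 0 < p.2 := hp
      show |F p| ^ 6 / p.2 ^ 2 = q5 p
      rw [hFu p]
      have habs : |u p * Real.sqrt p.2| ^ 6 = u p ^ 6 * p.2 ^ 3 := by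
        rw [abs_mul, mul_pow]
        rw [abs_of_nonneg (Real.sqrt_nonneg _)]
        have h6 : |u p| ^ 6 = u p ^ 6 := by
          rw [← abs_pow]
          exact abs_of_nonneg (by positivity)
        have hs6 : Real.sqrt p.2 ^ 6 = p.2 ^ 3 := by
          rw [show (6:ℕ) = 2 * 3 from rfl, pow_mul, Real.sq_sqrt hp'.le]
        rw [h6, hs6]
      rw [habs, hq5_def]
      field_simp
    rw [setIntegral_congr_fun hsmeas h1]
    rw [setIntegral_eq_integral_of_forall_compl_eq_zero, hP_def]
    intro p hp
    have hu0p : u p = 0 := hu0' p hp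
    simp [hq5_def, hu0p]
  have hHid : (∫ p in {p : ℝ × ℝ | 0 < p.2}, F p ^ 2 / p.2 ^ 2) = H := by
    have h1 : Set.EqOn (fun p : ℝ × ℝ => F p ^ 2 / p.2 ^ 2) q1 {p : ℝ × ℝ | 0 < p.2} := by
      intro p hp
      have hp' : 0 < p.2 := hp
      show F p ^ 2 / p.2 ^ 2 = q1 p
      rw [hFu p, hq1_def]
      have : (u p * Real.sqrt p.2) ^ 2 = u p ^ 2 * p.2 := by
        rw [mul_pow, Real.sq_sqrt hp'.le]
      rw [this]
      field_simp
    rw [setIntegral_congr_fun hsmeas h1]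
    rw [setIntegral_eq_integral_of_forall_compl_eq_zero, hH_def]
    intro p hp
    have hu0p : u p = 0 := hu0' p hp
    simp [hq1_def, hu0p]
  -- zero mixed term
  have hq4prod : Integrable q4 ((volume : Measure ℝ).prod volume) := by
    rw [← hvol]; exact hq4int
  have hq4zero : (∫ p : ℝ × ℝ, q4 p) = 0 := by
    rw [hvol, integral_prod _ hq4prod]
    have hzero : ∀ x : ℝ, (∫ t : ℝ, q4 (x, t)) = 0 := by
      intro x
      have h0 := integral_mul_deriv_eq_zero (fun t => u (x, t)) (hslice2 x) (slice_cs2 hcu x)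
      rw [← h0]
      apply integral_congr_ae
      apply Filter.Eventually.of_forall
      intro t
      show q4 (x, t) = u (x, t) * deriv (fun t' => u (x, t')) t
      have hh : deriv (fun t' => u (x, t')) t = u₂ (x, t) := (hd2 (x, t)).deriv
      rw [hh, hq4_def]
    simp [hzero]
  -- Dirichlet integral conversion
  have hDir : (∫ p in {p : ℝ × ℝ | 0 < p.2},
      ((deriv (fun x : ℝ => F (x, p.2)) p.1) ^ 2 + (deriv (fun y : ℝ => F (p.1, y)) p.2) ^ 2))
      = X + Y + H / 4 := by
    have h1 : Set.EqOn
        (fun p : ℝ × ℝ => (deriv (fun x : ℝ => F (x, p.2)) p.1) ^ 2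
          + (deriv (fun y : ℝ => F (p.1, y)) p.2) ^ 2)
        (fun p : ℝ × ℝ => q2 p + q3 p + q4 p + q1 p / 4) {p : ℝ × ℝ | 0 < p.2} := by
      intro p hp
      have hp' : 0 < p.2 := hp
      show (deriv (fun x : ℝ => F (x, p.2)) p.1) ^ 2
          + (deriv (fun y : ℝ => F (p.1, y)) p.2) ^ 2 = q2 p + q3 p + q4 p + q1 p / 4
      rw [hFder1 p, hFder2 p]
      exact hkey p hp'
    rw [setIntegral_congr_fun hsmeas h1]
    rw [setIntegral_eq_integral_of_forall_compl_eq_zero]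
    · have e1 : (∫ p : ℝ × ℝ, (q2 p + q3 p + q4 p + q1 p / 4))
          = (∫ p : ℝ × ℝ, (q2 p + q3 p + q4 p)) + ∫ p : ℝ × ℝ, q1 p / 4 :=
        integral_add (by exact (hq2int.add hq3int).add hq4int) (by exact hq1int.div_const 4)
      have e2 : (∫ p : ℝ × ℝ, (q2 p + q3 p + q4 p))
          = (∫ p : ℝ × ℝ, (q2 p + q3 p)) + ∫ p : ℝ × ℝ, q4 p :=
        integral_add (by exact hq2int.add hq3int) hq4int
      have e3 : (∫ p : ℝ × ℝ, (q2 p + q3 p)) = X + Y :=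
        integral_add hq2int hq3int
      have e4 : (∫ p : ℝ × ℝ, q1 p / 4) = H / 4 := integral_div 4 q1
      rw [e1, e2, e3, e4, hq4zero, add_zero]
    · intro p hp
      have hu0p : u p = 0 := hu0' p hp
      have hu10p : u₁ p = 0 := hu₁0' p hp
      have hu20p : u₂ p = 0 := hu₂0' p hp
      simp [hq1_def, hq2_def, hq3_def, hq4_def, hu0p, hu10p, hu20p]
  -- final algebra
  rw [hLHS, hHid, hDir]
  have hbr : X + Y + H / 4 - 3 / 16 * H = X + Y + H / 16 := by ring
  rw [hbr]
  have hc0 : (0:ℝ) ≤ 4 * Real.pi ^ (-(2:ℝ) / 3) := by positivity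
  have hE0 : 0 ≤ X + Y + H / 16 := by linarith
  have hc3 : (4 * Real.pi ^ (-(2:ℝ) / 3)) ^ 3 = 64 * (Real.pi ^ 2)⁻¹ := by
    rw [mul_pow]
    have h1 : (Real.pi ^ (-(2:ℝ) / 3)) ^ (3:ℕ) = Real.pi ^ ((-(2:ℝ) / 3) * 3) := by
      rw [← Real.rpow_natCast (Real.pi ^ (-(2:ℝ) / 3)) 3, ← Real.rpow_mul Real.pi_pos.le]
      norm_num
    rw [h1]
    have h2 : (-(2:ℝ) / 3) * 3 = (-2 : ℝ) := by norm_num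
    rw [h2, Real.rpow_neg Real.pi_pos.le]
    have h3 : Real.pi ^ (2:ℝ) = Real.pi ^ (2:ℕ) := by
      rw [← Real.rpow_natCast Real.pi 2]
      norm_num
    rw [h3]
    norm_num
  have hcube : P ≤ ((4 * Real.pi ^ (-(2:ℝ) / 3)) * (X + Y + H / 16)) ^ 3 :=
    cube_chain hP0 hX0 hY0 hH0 hPle (le_of_eq hc3.symm) hc0
  calc P ^ ((1:ℝ) / 3)
      ≤ (((4 * Real.pi ^ (-(2:ℝ) / 3)) * (X + Y + H / 16)) ^ 3) ^ ((1:ℝ) / 3) := by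
        apply Real.rpow_le_rpow hP0 hcube (by norm_num)
    _ = (4 * Real.pi ^ (-(2:ℝ) / 3)) * (X + Y + H / 16) := by
        rw [← Real.rpow_natCast ((4 * Real.pi ^ (-(2:ℝ) / 3)) * (X + Y + H / 16)) 3,
          ← Real.rpow_mul (mul_nonneg hc0 hE0)]
        norm_num
end

section
/- For every continuously differentiable compactly supported function F : M → ℝ on the upper half-plane M, one has the spectral bound (1/4) ∫_M |F|² dν ≤ ∫_{y>0} |∇F(x,y)|² dx dy. -/
open MeasureTheory Real Set

/-- Spectral bound for the hyperbolic Laplacian `−y²Δ` on the upper half-plane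
`M = {(x,y) : y > 0}` with invariant measure `dν = y⁻² dx dy`:
`(1/4) ∫_M |F|² dν ≤ ∫_M |DF|² dν = ∫_{y>0} |∇F|² dx dy`. -/
theorem hyperbolic_spectral_bound (F : ℝ × ℝ → ℝ)
    (hF : ContDiff ℝ 1 F) (hsupp : HasCompactSupport F)
    (hsub : tsupport F ⊆ {p : ℝ × ℝ | 0 < p.2}) :
    (1 / 4) * (∫ p in {p : ℝ × ℝ | 0 < p.2}, F p ^ 2 / p.2 ^ 2) ≤
      ∫ p in {p : ℝ × ℝ | 0 < p.2},
        ((deriv (fun x : ℝ => F (x, p.2)) p.1) ^ 2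
          + (deriv (fun y : ℝ => F (p.1, y)) p.2) ^ 2) := by
  classical
  set S : Set (ℝ × ℝ) := {p : ℝ × ℝ | 0 < p.2} with hSdef
  have hSopen : IsOpen S := isOpen_lt continuous_const continuous_snd
  have hSmeas : MeasurableSet S := hSopen.measurableSet
  have hFd : Differentiable ℝ F := hF.differentiable one_ne_zero
  set φ : ℝ × ℝ → (ℝ × ℝ →L[ℝ] ℝ) := fderiv ℝ F with hφdef
  have hφc : Continuous φ := hF.continuous_fderiv one_ne_zero
  -- identify the two partial derivatives with applications of the Fréchet derivative
  have hdx : ∀ p : ℝ × ℝ, deriv (fun x : ℝ => F (x, p.2)) p.1 = φ p (1, 0) := by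
    intro p
    have h1 : HasDerivAt (fun x : ℝ => ((x, p.2) : ℝ × ℝ)) ((1:ℝ), (0:ℝ)) p.1 :=
      (hasDerivAt_id p.1).prodMk (hasDerivAt_const p.1 p.2)
    have h2 := (hFd (p.1, p.2)).hasFDerivAt.comp_hasDerivAt p.1 h1
    simpa [Function.comp_def, hφdef] using h2.deriv
  have hdy : ∀ p : ℝ × ℝ, deriv (fun y : ℝ => F (p.1, y)) p.2 = φ p (0, 1) := by
    intro p
    have h1 : HasDerivAt (fun y : ℝ => ((p.1, y) : ℝ × ℝ)) ((0:ℝ), (1:ℝ)) p.2 :=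
      (hasDerivAt_const p.2 p.1).prodMk (hasDerivAt_id p.2)
    have h2 := (hFd (p.1, p.2)).hasFDerivAt.comp_hasDerivAt p.2 h1
    simpa [Function.comp_def, hφdef] using h2.deriv
  set K : Set (ℝ × ℝ) := tsupport F with hKdef
  have hKc : IsCompact K := hsupp
  have hKcl : IsClosed K := isClosed_tsupport F
  have hF0 : ∀ p ∉ K, F p = 0 := fun p hp => image_eq_zero_of_notMem_tsupport hp
  have hφ0 : ∀ p ∉ K, φ p = 0 := by
    intro p hp
    by_contra h
    exact hp (support_fderiv_subset ℝ (by simpa [hφdef, Function.mem_support] using h))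
  -- trivial case: empty support
  rcases K.eq_empty_or_nonempty with hKe | hKne
  · have hF' : ∀ p : ℝ × ℝ, F p = 0 := fun p => hF0 p (by simp [hKe])
    have h0 : F = fun _ => (0:ℝ) := funext hF'
    subst h0
    simp
  -- get δ > 0 with K ⊆ {p | δ ≤ p.2}
  obtain ⟨p₀, hp₀K, hp₀min⟩ := hKc.exists_isMinOn hKne continuous_snd.continuousOn
  set δ : ℝ := p₀.2 with hδdef
  have hδpos : 0 < δ := hsub hp₀K
  have hKy : ∀ p ∈ K, δ ≤ p.2 := fun p hp => hp₀min hp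
  -- get a bound r on K
  obtain ⟨r, hr⟩ := hKc.isBounded.subset_closedBall 0
  set R : ℝ := max r 0 + 1 with hRdef
  have hrR : r < R := lt_of_le_of_lt (le_max_left r 0) (lt_add_one _)
  have hRpos : 0 < R := lt_of_le_of_lt (le_max_right r 0) (lt_add_one _)
  have hK1 : ∀ p ∈ K, |p.1| ≤ r := by
    intro p hp
    have := mem_closedBall_zero_iff.1 (hr hp)
    exact le_trans (by simpa using norm_fst_le p) this
  have hK2 : ∀ p ∈ K, |p.2| ≤ r := by
    intro p hp
    have := mem_closedBall_zero_iff.1 (hr hp)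
    exact le_trans (by simpa using norm_snd_le p) this
  have hδr : δ ≤ r := le_trans (le_abs_self _) (hK2 p₀ hp₀K)
  set a : ℝ × ℝ := (-R, δ / 2) with hadef
  set b : ℝ × ℝ := (R, R) with hbdef
  have hab : a ≤ b := by
    constructor
    · simp only [hadef, hbdef]; linarith
    · simp only [hadef, hbdef]; linarith
  have hKIoo : ∀ p ∈ K, p ∈ Ioo a.1 b.1 ×ˢ Ioo a.2 b.2 := by
    intro p hp
    have h1 := hK1 p hp
    have h2 := hK2 p hp
    have h3 := hKy p hp
    have h1a := abs_le.1 h1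
    have h2a := abs_le.1 h2
    refine ⟨⟨by simp only [hadef]; linarith, by simp only [hbdef]; linarith⟩,
      ⟨by simp only [hadef]; linarith, by simp only [hbdef]; linarith⟩⟩
  have hKIcc : K ⊆ Icc a b := by
    intro p hp
    obtain ⟨⟨h1, h2⟩, h3, h4⟩ := hKIoo p hp
    exact ⟨⟨le_of_lt h1, le_of_lt h3⟩, ⟨le_of_lt h2, le_of_lt h4⟩⟩
  have hKS : K ⊆ S := hsub
  -- names for the various integrands
  set q : ℝ × ℝ → ℝ := fun p => F p ^ 2 / p.2 ^ 2 with hqdef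
  set w : ℝ × ℝ → ℝ := fun p => F p * φ p (0, 1) / p.2 - F p ^ 2 / (2 * p.2 ^ 2) with hwdef
  set m : ℝ × ℝ → ℝ := fun p => F p * φ p (0, 1) / p.2 - F p ^ 2 / (4 * p.2 ^ 2) with hmdef
  set g : ℝ × ℝ → ℝ := fun p => φ p (1, 0) ^ 2 + φ p (0, 1) ^ 2 with hgdef
  -- continuity helper
  have hcont_of : ∀ G : ℝ × ℝ → ℝ, (∀ p ∉ K, G p = 0) →
      (∀ p : ℝ × ℝ, p.2 ≠ 0 → ContinuousAt G p) → Continuous G := by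
    intro G h0 hc
    rw [continuous_iff_continuousAt]
    intro p
    by_cases hp : p.2 ≠ 0
    · exact hc p hp
    · push_neg at hp
      have hpK : p ∉ K := by
        intro h
        have := hKy p h
        rw [hp] at this
        linarith
      have hev : G =ᶠ[nhds p] fun _ => (0:ℝ) := by
        filter_upwards [hKcl.isOpen_compl.mem_nhds hpK] with y hy using h0 y hy
      exact (continuousAt_congr hev).2 continuousAt_const
  have hφyc : Continuous fun p : ℝ × ℝ => φ p (0, 1) := hφc.clm_apply continuous_const
  have hφxc : Continuous fun p : ℝ × ℝ => φ p (1, 0) := hφc.clm_apply continuous_const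
  have hqc : Continuous q := by
    refine hcont_of q (fun p hp => by simp [hqdef, hF0 p hp]) fun p hp => ?_
    exact ((hF.continuous.continuousAt).pow 2).div ((continuous_snd.continuousAt).pow 2)
      (pow_ne_zero 2 hp)
  have hwc : Continuous w := by
    refine hcont_of w (fun p hp => by simp [hwdef, hF0 p hp]) fun p hp => ?_
    refine ContinuousAt.sub ?_ ?_
    · exact ((hF.continuous.continuousAt).mul hφyc.continuousAt).div
        continuous_snd.continuousAt hp
    · exact ((hF.continuous.continuousAt).pow 2).div
        ((continuous_const.mul (continuous_snd.pow 2)).continuousAt)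
        (mul_ne_zero two_ne_zero (pow_ne_zero 2 hp))
  have hmc : Continuous m := by
    refine hcont_of m (fun p hp => by simp [hmdef, hF0 p hp]) fun p hp => ?_
    refine ContinuousAt.sub ?_ ?_
    · exact ((hF.continuous.continuousAt).mul hφyc.continuousAt).div
        continuous_snd.continuousAt hp
    · exact ((hF.continuous.continuousAt).pow 2).div
        ((continuous_const.mul (continuous_snd.pow 2)).continuousAt)
        (mul_ne_zero (by norm_num) (pow_ne_zero 2 hp))
  have hgc : Continuous g := (hφxc.pow 2).add (hφyc.pow 2)
  -- integrability
  have hint_of : ∀ G : ℝ × ℝ → ℝ, Continuous G → (∀ p ∉ K, G p = 0) → Integrable G := by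
    intro G hc h0
    exact hc.integrable_of_hasCompactSupport (HasCompactSupport.intro hKc h0)
  have hqint : Integrable q := hint_of q hqc fun p hp => by simp [hqdef, hF0 p hp]
  have hwint : Integrable w := hint_of w hwc fun p hp => by simp [hwdef, hF0 p hp, hφ0 p hp]
  have hmint : Integrable m := hint_of m hmc fun p hp => by simp [hmdef, hF0 p hp, hφ0 p hp]
  have hgint : Integrable g := hint_of g hgc fun p hp => by simp [hgdef, hφ0 p hp]
  -- the function u = F²/(2y) and its derivative
  set u : ℝ × ℝ → ℝ := fun p => F p ^ 2 / (2 * p.2) with hudef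
  have hu : ∀ p : ℝ × ℝ, p.2 ≠ 0 →
      DifferentiableAt ℝ u p ∧ fderiv ℝ u p (0, 1) = w p := by
    intro p hp
    have hne : (2:ℝ) * p.2 ≠ 0 := mul_ne_zero two_ne_zero hp
    have hsq : HasFDerivAt (fun q => F q ^ 2) ((2 * F p) • φ p) p := by
      have h := (hFd p).hasFDerivAt.mul (hFd p).hasFDerivAt
      have hfun : (fun q => F q ^ 2) = fun q => F q * F q := by funext q; ring
      rw [hfun, two_mul, add_smul]; exact h
    have h2 : HasFDerivAt (fun q : ℝ × ℝ => 2 * q.2)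
        ((2:ℝ) • ContinuousLinearMap.snd ℝ ℝ ℝ) p := hasFDerivAt_snd.const_mul 2
    have hiv := (hasDerivAt_inv hne).hasFDerivAt.comp p h2
    have hd := hsq.mul hiv
    simp only [Function.comp_def] at hd
    have hfun2 : u = fun q => F q ^ 2 * (2 * q.2)⁻¹ := by
      funext q
      show F q ^ 2 / (2 * q.2) = _
      rw [div_eq_mul_inv]
    rw [hfun2]
    refine ⟨hd.differentiableAt, ?_⟩
    rw [show (fun q => F q ^ 2 * (2 * q.2)⁻¹) = ((fun q => F q ^ 2) * fun x => (2 * x.2)⁻¹) from rfl, hd.fderiv]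
    simp only [hwdef, ContinuousLinearMap.add_apply, ContinuousLinearMap.smul_apply,
      ContinuousLinearMap.coe_comp', ContinuousLinearMap.smulRight_apply,
      ContinuousLinearMap.coe_snd', Function.comp, smul_eq_mul,
      ContinuousLinearMap.one_apply, ContinuousLinearMap.toSpanSingleton_apply]
    field_simp
    ring
  -- divergence theorem: ∫_{Icc a b} w = 0
  have hdiv : ∫ p in Icc a b, w p = 0 := by
    have hy_pos : ∀ p ∈ Icc a b, 0 < p.2 := by
      intro p hp
      have := hp.1.2
      simp only [hadef] at this
      linarith
    have hIi : IntegrableOn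
        (fun p : ℝ × ℝ => (0 : ℝ × ℝ →L[ℝ] ℝ) (1, 0) + fderiv ℝ u p (0, 1)) (Icc a b) := by
      refine (hwint.integrableOn.congr_fun ?_ measurableSet_Icc)
      intro p hp
      have := (hu p (ne_of_gt (hy_pos p hp))).2
      simp [this]
    have hD := integral_divergence_prod_Icc_of_hasFDerivAt_off_countable_of_le
      (fun _ => (0:ℝ)) u (fun _ => (0 : ℝ × ℝ →L[ℝ] ℝ)) (fun p => fderiv ℝ u p)
      a b hab ∅ countable_empty continuousOn_const
      (by
        intro p hp
        exact ((hF.continuous.continuousAt.pow 2).div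
          ((continuous_const.mul continuous_snd).continuousAt)
          (mul_ne_zero two_ne_zero (ne_of_gt (hy_pos p hp)))).continuousWithinAt)
      (fun p _ => hasFDerivAt_const 0 p)
      (by
        intro p hp
        have hp2 : 0 < p.2 := by
          have := hp.1.2.1
          simp only [hadef] at this
          linarith
        exact (hu p (ne_of_gt hp2)).1.hasFDerivAt)
      hIi
    have hb2 : ∀ x : ℝ, u (x, b.2) = 0 := by
      intro x
      have : (x, b.2) ∉ K := by
        intro h
        have := hK2 _ h
        simp only [hbdef] at this
        have : R ≤ r := le_trans (le_abs_self _) this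
        linarith
      simp [hudef, hF0 _ this]
    have ha2 : ∀ x : ℝ, u (x, a.2) = 0 := by
      intro x
      have : (x, a.2) ∉ K := by
        intro h
        have := hKy _ h
        simp only [hadef] at this
        linarith
      simp [hudef, hF0 _ this]
    rw [intervalIntegral.integral_congr (fun x _ => hb2 x),
        intervalIntegral.integral_congr (fun x _ => ha2 x)] at hD
    simp only [intervalIntegral.integral_const, smul_zero, sub_zero, zero_sub, add_zero,
      sub_self, neg_zero, smul_eq_mul, mul_zero] at hD
    rw [← hD]
    refine setIntegral_congr_fun measurableSet_Icc fun p hp => ?_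
    have := (hu p (ne_of_gt (hy_pos p hp))).2
    simp [this]
  -- transfer to the half-plane: ∫_S w = 0
  have hwS : ∫ p in S, w p = 0 := by
    have hw0 : ∀ p ∉ K, w p = 0 := fun p hp => by simp [hwdef, hF0 p hp, hφ0 p hp]
    have h1 : ∫ p in S, w p = ∫ p, w p :=
      setIntegral_eq_integral_of_forall_compl_eq_zero fun p hp => hw0 p fun h => hp (hKS h)
    have h2 : ∫ p in Icc a b, w p = ∫ p, w p :=
      setIntegral_eq_integral_of_forall_compl_eq_zero fun p hp => hw0 p fun h => hp (hKIcc h)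
    rw [h1, ← h2, hdiv]
  -- ∫_S m = (1/4) ∫_S q
  have hmS : ∫ p in S, m p = (1 / 4) * ∫ p in S, q p := by
    have hmeq : ∀ p : ℝ × ℝ, m p = w p + (1 / 4) * q p := by
      intro p
      simp only [hmdef, hwdef, hqdef]
      by_cases hp : p.2 = 0
      · simp [hp]
      · field_simp
        ring
    calc ∫ p in S, m p = ∫ p in S, (w p + (1 / 4) * q p) := by
          refine setIntegral_congr_fun hSmeas fun p _ => hmeq p
      _ = (∫ p in S, w p) + ∫ p in S, (1 / 4) * q p :=
          integral_add hwint.integrableOn ((hqint.integrableOn).const_mul _)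
      _ = (1 / 4) * ∫ p in S, q p := by
          rw [hwS, MeasureTheory.integral_const_mul, zero_add]
  -- pointwise bound on S
  have hpoint : ∀ p ∈ S, m p ≤ g p := by
    intro p hp
    have hp2 : (0:ℝ) < p.2 := hp
    have hsq1 := sq_nonneg (φ p (0, 1) - F p / (2 * p.2))
    have hsq2 := sq_nonneg (φ p (1, 0))
    have hexp : (φ p (0, 1) - F p / (2 * p.2)) ^ 2
        = φ p (0, 1) ^ 2 - F p * φ p (0, 1) / p.2 + F p ^ 2 / (4 * p.2 ^ 2) := by
      field_simp
      ring
    rw [hexp] at hsq1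
    simp only [hmdef, hgdef]
    linarith
  -- conclude
  have hmono : ∫ p in S, m p ≤ ∫ p in S, g p :=
    setIntegral_mono_on hmint.integrableOn hgint.integrableOn hSmeas hpoint
  have hgoal : ∫ p in S, ((deriv (fun x : ℝ => F (x, p.2)) p.1) ^ 2
      + (deriv (fun y : ℝ => F (p.1, y)) p.2) ^ 2) = ∫ p in S, g p := by
    refine setIntegral_congr_fun hSmeas fun p _ => ?_
    simp [hgdef, hdx p, hdy p]
  rw [hgoal, ← hmS]
  exact hmono
end

section
/- Let α > 0 and let f : M → ℝ be continuously differentiable with compact support in the upper half-plane M. Then ∫_M y^{2α} |∇( y^{-α} f(x,y) )|² dx dy = ∫_{y>0} |∇f(x,y)|² dx dy + α(α−1) ∫_M |f|² dν. -/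
open MeasureTheory Real

lemma key_alg (y d1 d2 F α : ℝ) (hy : 0 < y) :
    y ^ (2 * α) * ((y ^ (-α) * d1) ^ 2 + (-α * y ^ (-α - 1) * F + y ^ (-α) * d2) ^ 2)
      = (d1 ^ 2 + d2 ^ 2) + α * (α - 1) * (F ^ 2 / y ^ 2)
        - α * ((2 * F ^ 1 * d2 * y - F ^ 2 * 1) / (y ^ 2)) := by
  have he : y ^ (-α) ≠ 0 := by positivity
  have e2 : y ^ (-α - 1) = y ^ (-α) / y := by
    rw [show -α - 1 = -α + (-1) by ring, Real.rpow_add hy, Real.rpow_neg_one, div_eq_mul_inv]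
  have e1 : y ^ (2 * α) * (y ^ (-α)) ^ 2 = 1 := by
    rw [← Real.rpow_natCast (y ^ (-α)) 2, ← Real.rpow_mul hy.le, ← Real.rpow_add hy,
      show 2 * α + -α * ((2:ℕ):ℝ) = 0 by push_cast; ring, Real.rpow_zero]
  have e3 : y ^ (2 * α) = ((y ^ (-α)) ^ 2)⁻¹ :=
    eq_inv_of_mul_eq_one_left (by linear_combination e1)
  rw [e2, e3]
  field_simp
  ring

/-- The hyperbolic Dirichlet form as a weighted Euclidean Sobolev form: for `α > 0`
and `f` a `C¹` function compactly supported in the upper half-plane,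
`∫_M y^{2α} |∇(y^{-α} f)|² dx dy = ∫_{y>0} |∇f|² dx dy + α(α−1) ∫_M |f|² dν`,
where `dν = y⁻² dx dy`. -/
theorem hyperbolic_dirichlet_weighted_form (α : ℝ) (hα : 0 < α)
    (f : ℝ × ℝ → ℝ) (hf : ContDiff ℝ 1 f) (hsupp : HasCompactSupport f)
    (hsub : tsupport f ⊆ {p : ℝ × ℝ | 0 < p.2})
    (g : ℝ × ℝ → ℝ) (hg : ∀ q : ℝ × ℝ, g q = q.2 ^ (-α) * f q) :
    (∫ p in {p : ℝ × ℝ | 0 < p.2},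
        p.2 ^ (2 * α) *
          ((deriv (fun x : ℝ => g (x, p.2)) p.1) ^ 2
            + (deriv (fun y : ℝ => g (p.1, y)) p.2) ^ 2)) =
      (∫ p in {p : ℝ × ℝ | 0 < p.2},
          ((deriv (fun x : ℝ => f (x, p.2)) p.1) ^ 2
            + (deriv (fun y : ℝ => f (p.1, y)) p.2) ^ 2))
        + α * (α - 1) * ∫ p in {p : ℝ × ℝ | 0 < p.2}, f p ^ 2 / p.2 ^ 2 := by
  have hfd : Differentiable ℝ f := hf.differentiable one_ne_zero
  set S : Set (ℝ × ℝ) := {p : ℝ × ℝ | 0 < p.2} with hSdef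
  have hS : MeasurableSet S := (isOpen_lt continuous_const continuous_snd).measurableSet
  -- a positive lower bound for the second coordinate on the support
  obtain ⟨δ, hδ, hδf⟩ : ∃ δ > 0, ∀ p ∈ tsupport f, δ ≤ p.2 := by
    rcases (tsupport f).eq_empty_or_nonempty with he | hne
    · exact ⟨1, one_pos, by simp [he]⟩
    · obtain ⟨p₀, hp₀, hmin⟩ := hsupp.exists_isMinOn hne continuous_snd.continuousOn
      exact ⟨p₀.2, hsub hp₀, fun p hp => hmin hp⟩
  have f0 : ∀ p : ℝ × ℝ, p.2 < δ → f p = 0 := by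
    intro p hp
    by_contra hne
    exact absurd (hδf p (subset_closure hne)) (not_le.mpr hp)
  -- slice derivatives of f
  have hd1 : ∀ p : ℝ × ℝ, HasDerivAt (fun x => f (x, p.2)) (fderiv ℝ f p ((1:ℝ), (0:ℝ))) p.1 :=
    fun p => (hfd p).hasFDerivAt.comp_hasDerivAt p.1
      (HasDerivAt.prodMk (hasDerivAt_id p.1) (hasDerivAt_const p.1 p.2))
  have hd2 : ∀ p : ℝ × ℝ, HasDerivAt (fun y => f (p.1, y)) (fderiv ℝ f p ((0:ℝ), (1:ℝ))) p.2 :=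
    fun p => (hfd p).hasFDerivAt.comp_hasDerivAt p.2
      (HasDerivAt.prodMk (hasDerivAt_const p.2 p.1) (hasDerivAt_id p.2))
  -- the auxiliary function h = f² / y
  set h : ℝ × ℝ → ℝ := fun q => f q ^ 2 / q.2 with hhdef
  have hh : ContDiff ℝ 1 h := by
    rw [contDiff_iff_contDiffAt]
    intro p
    rcases lt_or_ge p.2 δ with hp | hp
    · have hev : h =ᶠ[nhds p] fun _ => (0:ℝ) := by
        filter_upwards [(isOpen_lt continuous_snd continuous_const).mem_nhds hp] with q hq
        simp [hhdef, f0 q hq]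
      exact contDiffAt_const.congr_of_eventuallyEq hev
    · exact ((hf.contDiffAt).pow 2).div contDiffAt_snd (by linarith)
  have hhcs : HasCompactSupport h := by
    apply HasCompactSupport.intro hsupp
    intro p hp
    simp [hhdef, image_eq_zero_of_notMem_tsupport hp]
  have hts : tsupport h ⊆ tsupport f := by
    apply closure_minimal _ isClosed_closure
    intro q hq
    by_contra hq2
    exact hq (by simp [hhdef, image_eq_zero_of_notMem_tsupport hq2])
  set G : ℝ × ℝ → ℝ := fun q => fderiv ℝ h q ((0:ℝ), (1:ℝ)) with hGdef
  have hdh2 : ∀ p : ℝ × ℝ, HasDerivAt (fun y => h (p.1, y)) (G p) p.2 :=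
    fun p => by
      have := (hh.differentiable one_ne_zero p).hasFDerivAt.comp_hasDerivAt p.2
        (HasDerivAt.prodMk (hasDerivAt_const p.2 p.1) (hasDerivAt_id p.2))
      exact this
  have hGcont : Continuous G :=
    (hh.continuous_fderiv one_ne_zero).clm_apply continuous_const
  have hG0 : ∀ p : ℝ × ℝ, p ∉ tsupport f → G p = 0 := by
    intro p hp
    have : p ∉ Function.support (fderiv ℝ h) := fun hc =>
      hp (hts (support_fderiv_subset ℝ hc))
    simp only [Function.mem_support, not_not] at this
    simp [hGdef, this]
  have hGcs : HasCompactSupport G :=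
    HasCompactSupport.intro hsupp hG0
  have hGint : Integrable G := hGcont.integrable_of_hasCompactSupport hGcs
  -- ∫ G = 0 by Fubini and 1D integration by parts
  have hGzero : (∫ p, G p) = 0 := by
    have hK : IsCompact (Prod.snd '' tsupport f) := hsupp.image continuous_snd
    rw [MeasureTheory.Measure.volume_eq_prod] at hGint
    rw [MeasureTheory.Measure.volume_eq_prod, MeasureTheory.integral_prod _ hGint]
    have hinner : ∀ x : ℝ, (∫ y, G (x, y)) = 0 := by
      intro x
      apply integral_eq_zero_of_hasDerivAt_of_integrable
        (f := fun y => h (x, y)) (fun y => hdh2 (x, y))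
      · apply (hGcont.comp (Continuous.prodMk_right x)).integrable_of_hasCompactSupport
        apply HasCompactSupport.intro hK
        intro y hy
        exact hG0 (x, y) (fun hc => hy ⟨(x, y), hc, rfl⟩)
      · apply (hh.continuous.comp (Continuous.prodMk_right x)).integrable_of_hasCompactSupport
        apply HasCompactSupport.intro hK
        intro y hy
        have : (x, y) ∉ tsupport f := fun hc => hy ⟨(x, y), hc, rfl⟩
        simp [hhdef, image_eq_zero_of_notMem_tsupport this]
    simp [hinner]
  have hGS : (∫ p in S, G p) = 0 := by
    rw [setIntegral_eq_integral_of_forall_compl_eq_zero fun p hp => hG0 p fun hc => hp (hsub hc)]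
    exact hGzero
  -- the gradient-square function A
  set A : ℝ × ℝ → ℝ := fun p => fderiv ℝ f p ((1:ℝ), (0:ℝ)) ^ 2 + fderiv ℝ f p ((0:ℝ), (1:ℝ)) ^ 2
    with hAdef
  have hAcont : Continuous A := by
    apply Continuous.add <;>
      exact (((hf.continuous_fderiv one_ne_zero).clm_apply continuous_const).pow 2)
  have hAcs : HasCompactSupport A := by
    apply HasCompactSupport.intro hsupp
    intro p hp
    have : p ∉ Function.support (fderiv ℝ f) := fun hc =>
      hp (tsupport_fderiv_subset ℝ (subset_closure hc))
    simp only [Function.mem_support, not_not] at this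
    simp [hAdef, this]
  have hAint : Integrable A := hAcont.integrable_of_hasCompactSupport hAcs
  -- the function Q = f² / y²
  set Q : ℝ × ℝ → ℝ := fun p => f p ^ 2 / p.2 ^ 2 with hQdef
  have hQcont : Continuous Q := by
    rw [continuous_iff_continuousAt]
    intro p
    rcases lt_or_ge p.2 δ with hp | hp
    · have hev : Q =ᶠ[nhds p] fun _ => (0:ℝ) := by
        filter_upwards [(isOpen_lt continuous_snd continuous_const).mem_nhds hp] with q hq
        simp [hQdef, f0 q hq]
      exact (continuousAt_const).congr hev.symm
    · exact ((hf.continuous.pow 2).continuousAt).div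
        ((continuous_snd.pow 2).continuousAt) (by have : (0:ℝ) < p.2 := lt_of_lt_of_le hδ hp; positivity)
  have hQcs : HasCompactSupport Q := by
    apply HasCompactSupport.intro hsupp
    intro p hp
    simp [hQdef, image_eq_zero_of_notMem_tsupport hp]
  have hQint : Integrable Q := hQcont.integrable_of_hasCompactSupport hQcs
  -- pointwise identity on S
  have hpt : ∀ p ∈ S, p.2 ^ (2 * α) *
      ((deriv (fun x : ℝ => g (x, p.2)) p.1) ^ 2
        + (deriv (fun y : ℝ => g (p.1, y)) p.2) ^ 2)
      = A p + α * (α - 1) * Q p - α * G p := by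
    intro p hp
    have hy : 0 < p.2 := hp
    -- x-derivative of g
    have hgx : deriv (fun x : ℝ => g (x, p.2)) p.1
        = p.2 ^ (-α) * fderiv ℝ f p ((1:ℝ), (0:ℝ)) := by
      have hfun : (fun x : ℝ => g (x, p.2)) = fun x : ℝ => p.2 ^ (-α) * f (x, p.2) :=
        funext fun x => hg (x, p.2)
      rw [hfun]
      exact ((hd1 p).const_mul _).deriv
    -- y-derivative of g
    have hgy : deriv (fun y : ℝ => g (p.1, y)) p.2
        = -α * p.2 ^ (-α - 1) * f p + p.2 ^ (-α) * fderiv ℝ f p ((0:ℝ), (1:ℝ)) := by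
      have hfun : (fun y : ℝ => g (p.1, y)) = fun y : ℝ => y ^ (-α) * f (p.1, y) :=
        funext fun y => hg (p.1, y)
      rw [hfun]
      have := (Real.hasDerivAt_rpow_const (x := p.2) (p := -α) (Or.inl hy.ne')).mul (hd2 p)
      exact this.deriv
    -- y-derivative of h
    have hhy : G p = (2 * f p ^ 1 * fderiv ℝ f p ((0:ℝ), (1:ℝ)) * p.2 - f p ^ 2 * 1) / p.2 ^ 2 := by
      have h1 : HasDerivAt (fun y => h (p.1, y))
          ((2 * f p ^ 1 * fderiv ℝ f p ((0:ℝ), (1:ℝ)) * p.2 - f p ^ 2 * 1) / p.2 ^ 2) p.2 := by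
        have := (((hd2 p).pow 2).div (hasDerivAt_id p.2) hy.ne')
        simpa [hhdef, Pi.div_def, Pi.pow_def] using this
      exact (hdh2 p).unique h1
    rw [hgx, hgy, hhy]
    exact key_alg p.2 _ _ (f p) α hy
  -- put everything together
  calc (∫ p in S, p.2 ^ (2 * α) *
        ((deriv (fun x : ℝ => g (x, p.2)) p.1) ^ 2
          + (deriv (fun y : ℝ => g (p.1, y)) p.2) ^ 2))
      = ∫ p in S, (A p + α * (α - 1) * Q p - α * G p) :=
        setIntegral_congr_fun hS hpt
    _ = (∫ p in S, (A p + α * (α - 1) * Q p)) - ∫ p in S, α * G p := by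
        apply integral_sub
        · exact (hAint.add (hQint.const_mul _)).integrableOn
        · exact (hGint.const_mul _).integrableOn
    _ = (∫ p in S, A p) + (∫ p in S, α * (α - 1) * Q p) - α * ∫ p in S, G p := by
        rw [integral_add hAint.integrableOn (hQint.const_mul _).integrableOn,
          integral_const_mul, integral_const_mul]
    _ = (∫ p in S, A p) + α * (α - 1) * (∫ p in S, Q p) := by
        rw [integral_const_mul, hGS]; ring
    _ = (∫ p in S,
          ((deriv (fun x : ℝ => f (x, p.2)) p.1) ^ 2
            + (deriv (fun y : ℝ => f (p.1, y)) p.2) ^ 2))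
        + α * (α - 1) * ∫ p in S, f p ^ 2 / p.2 ^ 2 := by
        have hfun : (fun p : ℝ × ℝ => deriv (fun x : ℝ => f (x, p.2)) p.1 ^ 2
            + deriv (fun y : ℝ => f (p.1, y)) p.2 ^ 2) = A :=
          funext fun p => by rw [(hd1 p).deriv, (hd2 p).deriv]
        rw [hfun]
end

section
/- Let s > 0 and define F : [0,∞) → ℝ by F(u) = (1+u)^{−s}. Then F is the bounded monotonically decreasing solution of the Euler–Lagrange equation: for all u > 0, −(d/du)[ u(u+1) F'(u) ] + s(s−1) F(u) = s² (1+u)^{−(s+1)}; equivalently, with p = 2 + 1/s, F satisfies −(u(u+1)F')' + s(s−1)F = s² F^{p−1}. -/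
open Real

lemma hasDerivAt_aux (s : ℝ) {v : ℝ} (hv : -1 < v) :
    HasDerivAt (fun x : ℝ => (1 + x) ^ (-s)) (-s * (1 + v) ^ (-s - 1)) v := by
  have h : (0:ℝ) < 1 + v := by linarith
  have h1 : HasDerivAt (fun x : ℝ => 1 + x) 1 v := (hasDerivAt_id v).const_add 1
  have h2 := (Real.hasDerivAt_rpow_const (x := 1 + v) (p := -s) (Or.inl h.ne')).comp v h1
  simpa [Function.comp_def] using h2

/-- `F(u) = (1+u)^{−s}` is the bounded, monotonically decreasing solution of the
radial Euler–Lagrange equation `−(u(u+1)F')' + s(s−1)F = s²(1+u)^{−(s+1)}`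
on `(0,∞)`; equivalently, with `p = 2 + 1/s`, the right-hand side is
`s² F^{p−1}`. -/
theorem euler_lagrange_radial_solution (s p : ℝ) (hs : 0 < s) (hp : p = 2 + 1 / s)
    (F : ℝ → ℝ) (hF : ∀ u : ℝ, F u = (1 + u) ^ (-s)) :
    (∃ B : ℝ, ∀ u ∈ Set.Ici (0 : ℝ), |F u| ≤ B) ∧
    AntitoneOn F (Set.Ici (0 : ℝ)) ∧
    ∀ u : ℝ, 0 < u →
      (-(deriv (fun v : ℝ => v * (v + 1) * deriv F v) u) + s * (s - 1) * F u
          = s ^ 2 * (1 + u) ^ (-(s + 1))) ∧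
      s ^ 2 * (1 + u) ^ (-(s + 1)) = s ^ 2 * F u ^ (p - 1) := by
  refine ⟨⟨1, fun u hu => ?_⟩, ?_, fun u hu => ⟨?_, ?_⟩⟩
  · rw [hF]
    have h1 : (0:ℝ) ≤ (1 + u) ^ (-s) := Real.rpow_nonneg (by simp at hu; linarith) _
    rw [abs_of_nonneg h1]
    exact Real.rpow_le_one_of_one_le_of_nonpos (by simp at hu; linarith) (by linarith)
  · intro a ha b hb hab
    simp only [Set.mem_Ici] at ha hb
    rw [hF, hF]
    exact Real.rpow_le_rpow_of_nonpos (by linarith) (by linarith) (by linarith)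
  · -- main ODE
    have hderivF : ∀ v : ℝ, -1 < v → deriv F v = -s * (1 + v) ^ (-s - 1) := by
      intro v hv
      have : deriv F v = deriv (fun x : ℝ => (1 + x) ^ (-s)) v := by
        congr 1; funext x; exact hF x
      rw [this, (hasDerivAt_aux s hv).deriv]
    have hne : (0:ℝ) < 1 + u := by linarith
    have heq : (fun v : ℝ => v * (v + 1) * deriv F v)
        =ᶠ[nhds u] (fun v : ℝ => -s * v * (1 + v) ^ (-s)) := by
      filter_upwards [eventually_gt_nhds hu] with v hv
      have hv1 : (-1:ℝ) < v := by linarith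
      have hvpos : (0:ℝ) < 1 + v := by linarith
      rw [hderivF v hv1]
      have : (1 + v) ^ (-s - 1) * (1 + v) = (1 + v) ^ (-s) := by
        rw [← Real.rpow_add_one hvpos.ne']; norm_num
      rw [← this]; ring
    rw [heq.deriv_eq]
    have hD : HasDerivAt (fun v : ℝ => -s * v * (1 + v) ^ (-s))
        (-s * (1 + u) ^ (-s) + -s * u * (-s * (1 + u) ^ (-s - 1))) u := by
      have h1 : HasDerivAt (fun v : ℝ => -s * v) (-s) u := by
        simpa using (hasDerivAt_id u).const_mul (-s)
      simpa [Pi.mul_def, mul_comm, mul_assoc, mul_left_comm] using h1.mul (hasDerivAt_aux s (by linarith))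
    rw [hD.deriv, hF]
    have hAB : (1 + u) ^ (-s) = (1 + u) * (1 + u) ^ (-s - 1) := by
      rw [mul_comm, ← Real.rpow_add_one hne.ne']; norm_num
    have hexp : -(s + 1) = -s - 1 := by ring
    rw [hexp, hAB]
    ring
  · rw [hF]
    have hne : (0:ℝ) < 1 + u := by linarith
    have hE : -s * (p - 1) = -(s + 1) := by
      rw [hp]; field_simp; ring
    rw [← Real.rpow_mul hne.le, hE]
end
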